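/- arXiv:1809.08796 — 6 statements merged into one kernel-verified Lean document; each statement's English description precedes it below -/
import Mathlib

section
/- For a hypergraph H=(V,E) and subsets F ⊆ U ⊆ V, the prime p_F is an associated prime of R/J(H)^s if and only if p_F is an associated prime of K[U]/J(H_U)^s, where H_U is the induced subhypergraph of H on U. -/
open MvPolynomial

noncomputable section

/-- A finite simple hypergraph on a vertex set `V`: edges are nonempty subsets of `V`
forming an antichain (a clutter). -/
structure FinHypergraph (σ : Type*) where
  V : Finset σ
  E : Finset (Finset σ)
  edge_sub : ∀ e ∈ E, e ⊆ V
  edge_nonempty : ∀ e ∈ E, e.Nonempty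
  simple : ∀ e ∈ E, ∀ f ∈ E, e ⊆ f → e = f

/-- The prime ideal generated by the variables indexed by `e`. -/
def primeOf {σ : Type*} (K : Type*) [Field K] (e : Finset σ) : Ideal (MvPolynomial σ K) :=
  Ideal.span ((fun i => (X i : MvPolynomial σ K)) '' e)

/-- The cover ideal of a set of edges: the intersection of the edge primes. -/
def coverIdeal {σ : Type*} (K : Type*) [Field K] (E : Finset (Finset σ)) :
    Ideal (MvPolynomial σ K) :=
  ⨅ e ∈ E, primeOf K e

/-- The squarefree monomial supported on `T`. -/
def xU {σ : Type*} (K : Type*) [Field K] (T : Finset σ) : MvPolynomial σ K :=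
  ∏ i ∈ T, X i
/-- `T` is a vertex cover of the edge set `E`. -/
def IsCover {σ : Type*} (E : Finset (Finset σ)) (T : Finset σ) : Prop :=
  ∀ e ∈ E, ∃ v ∈ e, v ∈ T

/-- `T` is a minimal vertex cover of the edge set `E`. -/
def IsMinimalCover {σ : Type*} (E : Finset (Finset σ)) (T : Finset σ) : Prop :=
  IsCover E T ∧ ∀ T' ⊂ T, ¬ IsCover E T'

/-- `m` is a minimal monomial generator of the monomial ideal `I`: it lies in `I`, and
every divisor of `m` lying in `I` is associated to `m`. -/
def IsMinMonGen {σ K : Type*} [Field K] (I : Ideal (MvPolynomial σ K))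
    (m : MvPolynomial σ K) : Prop :=
  m ∈ I ∧ ∀ d : MvPolynomial σ K, d ∣ m → d ∈ I → Associated d m

/-- `(V', E')` is a shadow of the hypergraph `H`. -/
def IsShadow {σ : Type*} [DecidableEq σ] (H : FinHypergraph σ) (V' : Finset σ) (E' : Finset (Finset σ)) : Prop :=
  V' ⊆ H.V ∧ (∀ e ∈ E', e ⊆ V') ∧ (∀ e ∈ E', e.Nonempty) ∧
    (∀ e ∈ E', ∀ f ∈ E', e ⊆ f → e = f) ∧
    E'.card = H.E.card ∧ ∀ e ∈ H.E, e ∩ V' ∈ E'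

/-- The cover ideal of a hypergraph on vertex set `V'` (edges `E'`, subsets of `V'`),
as an ideal of the small polynomial ring `K[V']`. -/
def smallCover {σ : Type*} [DecidableEq σ] (K : Type*) [Field K] (V' : Finset σ)
    (E' : Finset (Finset σ)) : Ideal (MvPolynomial {x : σ // x ∈ V'} K) :=
  ⨅ e ∈ E', primeOf K (e.subtype (· ∈ V'))

/-- `(V', E')` is an odd cycle graph `C_{2n+1}` for some positive `n`. -/
def IsOddCycle {σ : Type*} [DecidableEq σ] (V' : Finset σ) (E' : Finset (Finset σ)) : Prop :=
  ∃ n : ℕ, 0 < n ∧ ∃ f : Fin (2 * n + 1) → σ, Function.Injective f ∧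
    V' = Finset.univ.image f ∧ E' = Finset.univ.image (fun i => ({f i, f (i + 1)} : Finset σ))

/-- `IsAssociatedPrime` with its meaning in the older Mathlib: `I` is prime and is the
annihilator of some `x : M`. -/
def IsAssociatedPrimeOld {R : Type*} [CommRing R] (I : Ideal R) (M : Type*) [AddCommGroup M]
    [Module R M] : Prop :=
  I.IsPrime ∧ ∃ x : M, I = (Submodule.span R {x}).annihilator

namespace AssocAux
open Pointwise

variable {σ : Type*} {K : Type*} [Field K]

/-- The monomial ideal generated by monomials with exponents in `A`. -/
def monoIdeal (K : Type*) [Field K] (A : Set (σ →₀ ℕ)) : Ideal (MvPolynomial σ K) :=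
  Ideal.span ((fun u => (monomial u (1 : K))) '' A)

/-- The ideal of polynomials all of whose monomials are divisible by a monomial from `A`. -/
def upIdeal (K : Type*) [Field K] (A : Set (σ →₀ ℕ)) : Ideal (MvPolynomial σ K) where
  carrier := {f | ∀ u ∈ f.support, ∃ a ∈ A, a ≤ u}
  zero_mem' := by simp
  add_mem' := by
    classical
    intro f g hf hg u hu
    rcases Finset.mem_union.mp (MvPolynomial.support_add hu) with h | h
    · exact hf u h
    · exact hg u h
  smul_mem' := by
    classical
    intro c f hf u hu
    rw [smul_eq_mul] at hu
    have := MvPolynomial.support_mul c f hu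
    rcases Finset.mem_add.mp this with ⟨v, hv, w, hw, rfl⟩
    obtain ⟨a, haA, haw⟩ := hf w hw
    exact ⟨a, haA, haw.trans le_add_self⟩

lemma mem_monoIdeal {A : Set (σ →₀ ℕ)} {f : MvPolynomial σ K} :
    f ∈ monoIdeal K A ↔ ∀ u ∈ f.support, ∃ a ∈ A, a ≤ u := by
  classical
  constructor
  · intro hf
    have : monoIdeal K A ≤ upIdeal K A := by
      rw [monoIdeal, Ideal.span_le]
      rintro x ⟨a, haA, rfl⟩
      intro u hu
      rw [MvPolynomial.support_monomial, if_neg (one_ne_zero : (1:K) ≠ 0),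
        Finset.mem_singleton] at hu
      exact ⟨a, haA, hu.ge⟩
    exact this hf
  · intro hf
    rw [MvPolynomial.as_sum f]
    refine Ideal.sum_mem _ fun u hu => ?_
    obtain ⟨a, haA, hau⟩ := hf u hu
    have : (monomial u (coeff u f) : MvPolynomial σ K)
        = monomial (u - a) (coeff u f) * monomial a 1 := by
      rw [monomial_mul, mul_one, tsub_add_cancel_of_le hau]
    rw [this]
    exact Ideal.mul_mem_left _ _ (Ideal.subset_span ⟨a, haA, rfl⟩)

lemma monomial_mem_monoIdeal {A : Set (σ →₀ ℕ)} {c : σ →₀ ℕ} :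
    (monomial c (1 : K)) ∈ monoIdeal K A ↔ ∃ a ∈ A, a ≤ c := by
  classical
  rw [mem_monoIdeal]
  constructor
  · intro h
    exact h c (by rw [MvPolynomial.support_monomial, if_neg (one_ne_zero : (1:K) ≠ 0)]; simp)
  · intro h u hu
    rw [MvPolynomial.support_monomial, if_neg (one_ne_zero : (1:K) ≠ 0),
      Finset.mem_singleton] at hu
    subst hu; exact h

lemma mem_primeOf {F : Finset σ} {f : MvPolynomial σ K} :
    f ∈ primeOf K F ↔ ∀ u ∈ f.support, ∃ a ∈ F, u a ≠ 0 := by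
  have : primeOf K F = monoIdeal K ((fun v => Finsupp.single v 1) '' (F : Set σ)) := by
    rw [primeOf, monoIdeal, Set.image_image]
    rfl
  rw [this, mem_monoIdeal]
  refine forall₂_congr fun u hu => ?_
  constructor
  · rintro ⟨a, ⟨v, hv, rfl⟩, hle⟩
    exact ⟨v, hv, by
      have := Finsupp.single_le_iff.mp hle
      omega⟩
  · rintro ⟨v, hv, hne⟩
    exact ⟨Finsupp.single v 1, ⟨v, hv, rfl⟩, Finsupp.single_le_iff.mpr (by omega)⟩



/-- `s`-fold sumset. -/
def sumset : ℕ → Set (σ →₀ ℕ) → Set (σ →₀ ℕ)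
  | 0, _ => {0}
  | n + 1, A => A + sumset n A

lemma monoIdeal_mul (A B : Set (σ →₀ ℕ)) :
    monoIdeal K A * monoIdeal K B = monoIdeal K (A + B) := by
  rw [monoIdeal, monoIdeal, monoIdeal, Ideal.span_mul_span']
  congr 1
  ext f
  constructor
  · rintro ⟨x, ⟨a, ha, rfl⟩, y, ⟨b, hb, rfl⟩, rfl⟩
    exact ⟨a + b, Set.add_mem_add ha hb, by simp [monomial_mul]⟩
  · rintro ⟨c, ⟨a, ha, b, hb, rfl⟩, rfl⟩
    exact ⟨monomial a 1, ⟨a, ha, rfl⟩, monomial b 1, ⟨b, hb, rfl⟩, by simp [monomial_mul]⟩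

lemma monoIdeal_pow (A : Set (σ →₀ ℕ)) (s : ℕ) :
    (monoIdeal K A) ^ s = monoIdeal K (sumset s A) := by
  induction s with
  | zero =>
      rw [pow_zero, sumset]
      have : monoIdeal K ({0} : Set (σ →₀ ℕ)) = Ideal.span {1} := by
        rw [monoIdeal]; congr 1; simp [MvPolynomial.monomial_zero']
      rw [this, Ideal.span_singleton_one, Ideal.one_eq_top]
  | succ n ih =>
      rw [pow_succ, ih, sumset]
      rw [monoIdeal_mul, add_comm]

lemma iInf_primeOf_eq {ι : Type*} (E : Finset ι) (g : ι → Finset σ) :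
    (⨅ e ∈ E, primeOf K (g e)) = monoIdeal K {u | ∀ e ∈ E, ∃ v ∈ g e, u v ≠ 0} := by
  ext f
  simp only [Ideal.mem_iInf, mem_primeOf, mem_monoIdeal]
  constructor
  · intro h u hu
    exact ⟨u, fun e he => h e he u hu, le_rfl⟩
  · rintro h e he u hu
    obtain ⟨a, ha, hau⟩ := h u hu
    obtain ⟨v, hv, hvne⟩ := ha e he
    have : a v ≤ u v := hau v
    exact ⟨v, hv, by omega⟩

lemma mem_colon_monomial {A : Set (σ →₀ ℕ)} {t : σ →₀ ℕ} {f : MvPolynomial σ K} :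
    f ∈ (monoIdeal K A).colon ((Ideal.span {monomial t 1} : Ideal (MvPolynomial σ K)) : Set (MvPolynomial σ K)) ↔
      ∀ u ∈ f.support, ∃ b ∈ A, b ≤ u + t := by
  classical
  rw [Ideal.mem_colon_span_singleton, mem_monoIdeal]
  constructor
  · intro h u hu
    have hmem : u + t ∈ (f * monomial t (1:K)).support := by
      rw [MvPolynomial.mem_support_iff, MvPolynomial.coeff_mul_monomial, mul_one]
      exact MvPolynomial.mem_support_iff.mp hu
    exact h (u + t) hmem
  · intro h w hw
    have := MvPolynomial.support_mul f (monomial t (1:K)) hw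
    rw [MvPolynomial.support_monomial, if_neg (one_ne_zero : (1:K) ≠ 0)] at this
    rcases Finset.mem_add.mp this with ⟨u, hu, t', ht', rfl⟩
    rw [Finset.mem_singleton] at ht'
    subst ht'
    exact h u hu


lemma primeOf_isPrime (F : Finset σ) : (primeOf K F).IsPrime := by
  classical
  let φ : MvPolynomial σ K →ₐ[K] MvPolynomial σ K :=
    aeval (fun i => if i ∈ F then 0 else X i)
  have hker : RingHom.ker (φ : MvPolynomial σ K →+* MvPolynomial σ K) = primeOf K F := by
    apply le_antisymm
    · intro f hf
      have hcomp : (Ideal.Quotient.mk (primeOf K F)).comp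
          (φ : MvPolynomial σ K →+* MvPolynomial σ K) = Ideal.Quotient.mk (primeOf K F) := by
        apply MvPolynomial.ringHom_ext
        · intro a; simp [φ]
        · intro i
          rw [RingHom.comp_apply]
          show Ideal.Quotient.mk _ (φ (X i)) = _
          by_cases hi : i ∈ F
          · have hphi : φ (X i) = 0 := by simp [φ, hi]
            rw [hphi, map_zero, eq_comm, Ideal.Quotient.eq_zero_iff_mem]
            exact Ideal.subset_span ⟨i, hi, rfl⟩
          · have hphi : φ (X i) = X i := by simp [φ, hi]
            rw [hphi]
      have : Ideal.Quotient.mk (primeOf K F) (φ f) = Ideal.Quotient.mk (primeOf K F) f :=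
        congrFun (congrArg DFunLike.coe hcomp) f
      rw [RingHom.mem_ker] at hf
      have hphi : φ f = 0 := hf
      rw [hphi, map_zero, eq_comm, Ideal.Quotient.eq_zero_iff_mem] at this
      exact this
    · rw [primeOf, Ideal.span_le]
      rintro x ⟨i, hi, rfl⟩
      simp only [Finset.mem_coe] at hi
      simp [RingHom.mem_ker, φ, hi]
  rw [← hker]
  exact RingHom.ker_isPrime _

lemma isAssociatedPrime_quotient_iff {I P : Ideal (MvPolynomial σ K)} :
    IsAssociatedPrimeOld P (MvPolynomial σ K ⧸ I) ↔
      P.IsPrime ∧ ∃ f, I.colon ((Ideal.span {f} : Ideal (MvPolynomial σ K)) : Set (MvPolynomial σ K)) = P := by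
  unfold IsAssociatedPrimeOld
  refine and_congr_right fun hP => ?_
  constructor
  · rintro ⟨x, hx⟩
    obtain ⟨f, rfl⟩ := Ideal.Quotient.mk_surjective x
    refine ⟨f, ?_⟩
    ext r
    rw [Ideal.mem_colon_span_singleton, hx, Submodule.mem_annihilator_span_singleton]
    show _ ↔ r • (Submodule.Quotient.mk f) = 0
    rw [← Submodule.Quotient.mk_smul, smul_eq_mul]
    show _ ↔ Ideal.Quotient.mk I (r * f) = 0
    rw [Ideal.Quotient.eq_zero_iff_mem]
  · rintro ⟨f, hf⟩
    refine ⟨Ideal.Quotient.mk I f, ?_⟩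
    ext r
    rw [← hf, Ideal.mem_colon_span_singleton, Submodule.mem_annihilator_span_singleton]
    show r * f ∈ I ↔ r • (Submodule.Quotient.mk f) = 0
    rw [← Submodule.Quotient.mk_smul, smul_eq_mul]
    show _ ↔ Ideal.Quotient.mk I (r * f) = 0
    rw [Ideal.Quotient.eq_zero_iff_mem]

lemma exists_colon_eq_iff (B : Set (σ →₀ ℕ)) (F : Finset σ) :
    (∃ f : MvPolynomial σ K, (monoIdeal K B).colon ((Ideal.span {f} : Ideal (MvPolynomial σ K)) : Set (MvPolynomial σ K)) = primeOf K F) ↔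
      ∃ t : σ →₀ ℕ, ∀ c : σ →₀ ℕ, (∃ b ∈ B, b ≤ c + t) ↔ ∃ a ∈ F, c a ≠ 0 := by
  classical
  constructor
  · rintro ⟨f, hf⟩
    have hP : (primeOf K F).IsPrime := primeOf_isPrime F
    have hf0 : f ≠ 0 := by
      rintro rfl
      apply hP.ne_top
      rw [← hf, eq_top_iff]
      intro g _
      rw [Ideal.mem_colon_span_singleton, mul_zero]
      exact zero_mem _
    -- every exponent of f gives an upper bound
    have step2 : ∀ u ∈ f.support,
        primeOf K F ≤ (monoIdeal K B).colon ((Ideal.span {monomial u 1} : Ideal (MvPolynomial σ K)) : Set (MvPolynomial σ K)) := by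
      intro u hu
      rw [primeOf, Ideal.span_le]
      rintro x ⟨a, ha, rfl⟩
      have hXa : (X a : MvPolynomial σ K) * f ∈ monoIdeal K B := by
        rw [← Ideal.mem_colon_span_singleton, hf]
        exact Ideal.subset_span ⟨a, ha, rfl⟩
      have hmem : Finsupp.single a 1 + u ∈ ((X a : MvPolynomial σ K) * f).support := by
        rw [MvPolynomial.mem_support_iff, MvPolynomial.coeff_X_mul]
        exact MvPolynomial.mem_support_iff.mp hu
      obtain ⟨b, hb, hble⟩ := mem_monoIdeal.mp hXa _ hmem
      rw [SetLike.mem_coe, Ideal.mem_colon_span_singleton]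
      have : (X a : MvPolynomial σ K) * monomial u 1 = monomial (Finsupp.single a 1 + u) 1 := by
        rw [MvPolynomial.X, monomial_mul, one_mul]
      rw [this, monomial_mem_monoIdeal]
      exact ⟨b, hb, hble⟩
    have step3 : (f.support.inf fun u => (monoIdeal K B).colon ((Ideal.span {monomial u 1} : Ideal (MvPolynomial σ K)) : Set (MvPolynomial σ K)))
        ≤ primeOf K F := by
      rw [← hf]
      intro g hg
      rw [Ideal.mem_colon_span_singleton]
      have : g * f = ∑ u ∈ f.support, C (coeff u f) * (g * monomial u 1) := by
        conv_lhs => rw [MvPolynomial.as_sum f]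
        rw [Finset.mul_sum]
        refine Finset.sum_congr rfl fun u hu => ?_
        rw [← mul_assoc, mul_comm (C (coeff u f)) g, mul_assoc, MvPolynomial.C_mul_monomial,
          mul_one]
      rw [this]
      refine Ideal.sum_mem _ fun u hu => Ideal.mul_mem_left _ _ ?_
      have := Finset.inf_le hu (f := fun u => (monoIdeal K B).colon ((Ideal.span {monomial u 1} : Ideal (MvPolynomial σ K)) : Set (MvPolynomial σ K)))
      rw [← Ideal.mem_colon_span_singleton]
      exact this hg
    obtain ⟨u, hu, hle⟩ := (Ideal.IsPrime.inf_le' hP).mp step3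
    have hcolon : (monoIdeal K B).colon ((Ideal.span {monomial u 1} : Ideal (MvPolynomial σ K)) : Set (MvPolynomial σ K)) = primeOf K F :=
      le_antisymm hle (step2 u hu)
    refine ⟨u, fun c => ?_⟩
    have h1 : (monomial c (1:K)) ∈ (monoIdeal K B).colon ((Ideal.span {monomial u 1} : Ideal (MvPolynomial σ K)) : Set (MvPolynomial σ K)) ↔
        ∃ b ∈ B, b ≤ c + u := by
      rw [mem_colon_monomial]
      constructor
      · intro h
        exact h c (by rw [MvPolynomial.support_monomial, if_neg (one_ne_zero : (1:K) ≠ 0)]; simp)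
      · intro h w hw
        rw [MvPolynomial.support_monomial, if_neg (one_ne_zero : (1:K) ≠ 0),
          Finset.mem_singleton] at hw
        subst hw; exact h
    have h2 : (monomial c (1:K)) ∈ primeOf K F ↔ ∃ a ∈ F, c a ≠ 0 := by
      rw [mem_primeOf]
      constructor
      · intro h
        exact h c (by rw [MvPolynomial.support_monomial, if_neg (one_ne_zero : (1:K) ≠ 0)]; simp)
      · intro h w hw
        rw [MvPolynomial.support_monomial, if_neg (one_ne_zero : (1:K) ≠ 0),
          Finset.mem_singleton] at hw
        subst hw; exact h
    rw [← h1, ← h2, hcolon]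
  · rintro ⟨t, ht⟩
    refine ⟨monomial t 1, ?_⟩
    ext g
    rw [mem_colon_monomial, mem_primeOf]
    exact forall₂_congr fun u _ => ht u


lemma sumset_zero (A : Set (σ →₀ ℕ)) : sumset 0 A = {0} := rfl

lemma sumset_succ (n : ℕ) (A : Set (σ →₀ ℕ)) : sumset (n + 1) A = A + sumset n A := rfl

section extend
variable {P : σ → Prop} [DecidablePred P]

lemma extendDomain_apply_of_mem (x : Subtype P →₀ ℕ) {a : σ} (h : P a) :
    x.extendDomain a = x ⟨a, h⟩ := dif_pos h

lemma extendDomain_apply_of_not_mem (x : Subtype P →₀ ℕ) {a : σ} (h : ¬ P a) :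
    x.extendDomain a = 0 := by
  rw [Finsupp.extendDomain_eq_embDomain_subtype]
  exact Finsupp.embDomain_notin_range _ _ _ (by simpa using h)

lemma extendDomain_add (x y : Subtype P →₀ ℕ) :
    (x + y).extendDomain = x.extendDomain + y.extendDomain := by
  ext a
  rw [Finsupp.add_apply]
  by_cases h : P a
  · rw [extendDomain_apply_of_mem _ h, extendDomain_apply_of_mem _ h,
      extendDomain_apply_of_mem _ h, Finsupp.add_apply]
  · rw [extendDomain_apply_of_not_mem _ h, extendDomain_apply_of_not_mem _ h,
      extendDomain_apply_of_not_mem _ h]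

lemma extendDomain_mono {x y : Subtype P →₀ ℕ} (h : x ≤ y) :
    x.extendDomain ≤ y.extendDomain := by
  rw [Finsupp.le_def]
  intro a
  by_cases ha : P a
  · rw [extendDomain_apply_of_mem _ ha, extendDomain_apply_of_mem _ ha]
    exact Finsupp.le_def.mp h _
  · rw [extendDomain_apply_of_not_mem _ ha, extendDomain_apply_of_not_mem _ ha]

lemma extendDomain_subtypeDomain_le (c : σ →₀ ℕ) :
    (Finsupp.subtypeDomain P c).extendDomain ≤ c := by
  rw [Finsupp.le_def]
  intro a
  by_cases ha : P a
  · rw [extendDomain_apply_of_mem _ ha, Finsupp.subtypeDomain_apply]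
  · rw [extendDomain_apply_of_not_mem _ ha]
    exact Nat.zero_le _

lemma subtypeDomain_mono {x y : σ →₀ ℕ} (h : x ≤ y) :
    Finsupp.subtypeDomain P x ≤ Finsupp.subtypeDomain P y := by
  rw [Finsupp.le_def]
  intro a
  rw [Finsupp.subtypeDomain_apply, Finsupp.subtypeDomain_apply]
  exact Finsupp.le_def.mp h _

end extend

variable [DecidableEq σ]

lemma combinatorial_core (V U F : Finset σ) (E : Finset (Finset σ))
    (hFU : F ⊆ U) (hUV : U ⊆ V) (hEV : ∀ e ∈ E, e ⊆ V) (s : ℕ) :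
    (∃ t : σ →₀ ℕ, ∀ c : σ →₀ ℕ,
        (∃ b ∈ sumset s {u : σ →₀ ℕ | ∀ e ∈ E, ∃ v ∈ e, u v ≠ 0}, b ≤ c + t) ↔
          ∃ a ∈ F, c a ≠ 0) ↔
      (∃ t' : {x : σ // x ∈ U} →₀ ℕ, ∀ c' : {x : σ // x ∈ U} →₀ ℕ,
        (∃ b' ∈ sumset s {u : {x : σ // x ∈ U} →₀ ℕ |
            ∀ e ∈ E.filter (fun e => e ⊆ U), ∃ v ∈ e.subtype (· ∈ U), u v ≠ 0}, b' ≤ c' + t') ↔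
          ∃ a' ∈ F.subtype (· ∈ U), c' a' ≠ 0) := by
  classical
  set A : Set (σ →₀ ℕ) := {u | ∀ e ∈ E, ∃ v ∈ e, u v ≠ 0} with hA
  set A' : Set ({x : σ // x ∈ U} →₀ ℕ) :=
    {u | ∀ e ∈ E.filter (fun e => e ⊆ U), ∃ v ∈ e.subtype (· ∈ U), u v ≠ 0} with hA'
  set χ : σ →₀ ℕ := Finsupp.indicator (V \ U) (fun _ _ => 1) with hχ
  have hχ_mem : ∀ {v}, v ∈ V → v ∉ U → χ v = 1 := by
    intro v hv hvu
    rw [hχ, Finsupp.indicator_of_mem (Finset.mem_sdiff.mpr ⟨hv, hvu⟩)]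
  have hχ_not : ∀ {v}, v ∈ U → χ v = 0 := by
    intro v hv
    rw [hχ, Finsupp.indicator_of_notMem (fun h => (Finset.mem_sdiff.mp h).2 hv)]
  -- membership transfer
  have hA'A : ∀ a' ∈ A', a'.extendDomain + χ ∈ A := by
    intro a' ha' e he
    by_cases hsub : e ⊆ U
    · obtain ⟨v', hv', hne⟩ := ha' e (Finset.mem_filter.mpr ⟨he, hsub⟩)
      refine ⟨(v' : σ), Finset.mem_subtype.mp hv', ?_⟩
      rw [Finsupp.add_apply, extendDomain_apply_of_mem _ v'.2]
      simp only [Subtype.coe_eta]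
      omega
    · obtain ⟨v, hv, hvu⟩ := Finset.not_subset.mp hsub
      refine ⟨v, hv, ?_⟩
      rw [Finsupp.add_apply, hχ_mem (hEV e he hv) hvu]
      omega
  have hAA' : ∀ a ∈ A, Finsupp.subtypeDomain (· ∈ U) a ∈ A' := by
    intro a ha e he
    obtain ⟨heE, hsub⟩ := Finset.mem_filter.mp he
    obtain ⟨v, hv, hne⟩ := ha e heE
    exact ⟨⟨v, hsub hv⟩, Finset.mem_subtype.mpr hv, hne⟩
  have hS1 : ∀ n, ∀ b' ∈ sumset n A', b'.extendDomain + n • χ ∈ sumset n A := by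
    intro n
    induction n with
    | zero =>
        intro b' hb'
        rw [sumset_zero, Set.mem_singleton_iff] at hb'
        subst hb'
        have h0 : (0 : {x : σ // x ∈ U} →₀ ℕ).extendDomain = 0 := by
          ext a
          by_cases h : a ∈ U
          · rw [extendDomain_apply_of_mem _ h]; rfl
          · rw [extendDomain_apply_of_not_mem _ h]; rfl
        rw [h0, zero_nsmul, add_zero, sumset_zero]
        rfl
    | succ n ih =>
        intro b' hb'
        rw [sumset_succ] at hb'
        obtain ⟨x, hx, y, hy, rfl⟩ := Set.mem_add.mp hb'
        have : (x + y).extendDomain + (n + 1) • χ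
            = (x.extendDomain + χ) + (y.extendDomain + n • χ) := by
          rw [extendDomain_add, succ_nsmul]
          abel
        rw [sumset_succ, this]
        exact Set.add_mem_add (hA'A x hx) (ih y hy)
  have hS2 : ∀ n, ∀ b ∈ sumset n A, Finsupp.subtypeDomain (· ∈ U) b ∈ sumset n A' := by
    intro n
    induction n with
    | zero =>
        intro b hb
        rw [sumset_zero, Set.mem_singleton_iff] at hb
        subst hb
        rw [Finsupp.subtypeDomain_zero, sumset_zero]
        rfl
    | succ n ih =>
        intro b hb
        rw [sumset_succ] at hb
        obtain ⟨x, hx, y, hy, rfl⟩ := Set.mem_add.mp hb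
        rw [sumset_succ, Finsupp.subtypeDomain_add]
        exact Set.add_mem_add (hAA' x hx) (ih y hy)
  constructor
  · rintro ⟨t, ht⟩
    refine ⟨Finsupp.subtypeDomain (· ∈ U) t, fun c' => ?_⟩
    constructor
    · rintro ⟨b', hb', hle⟩
      have hb : b'.extendDomain + s • χ ∈ sumset s A := hS1 s b' hb'
      have hble : b'.extendDomain + s • χ ≤ (c'.extendDomain + s • χ) + t := by
        calc b'.extendDomain + s • χ
            ≤ (c' + Finsupp.subtypeDomain (· ∈ U) t).extendDomain + s • χ := by
              exact add_le_add_left (extendDomain_mono hle) _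
          _ = c'.extendDomain + (Finsupp.subtypeDomain (· ∈ U) t).extendDomain + s • χ := by
              rw [extendDomain_add]
          _ ≤ c'.extendDomain + t + s • χ := by
              exact add_le_add_left (add_le_add_right (extendDomain_subtypeDomain_le t) _) _
          _ = (c'.extendDomain + s • χ) + t := by abel
      obtain ⟨a, haF, hane⟩ := (ht (c'.extendDomain + s • χ)).mp ⟨_, hb, hble⟩
      have haU : a ∈ U := hFU haF
      refine ⟨⟨a, haU⟩, Finset.mem_subtype.mpr haF, ?_⟩
      rw [Finsupp.add_apply, extendDomain_apply_of_mem _ haU, Finsupp.smul_apply,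
        hχ_not haU] at hane
      simpa using hane
    · rintro ⟨a', ha', hane⟩
      have haF : (a' : σ) ∈ F := Finset.mem_subtype.mp ha'
      obtain ⟨b, hb, hble⟩ := (ht c'.extendDomain).mpr
        ⟨a', haF, by rw [extendDomain_apply_of_mem _ a'.2]; simpa using hane⟩
      refine ⟨Finsupp.subtypeDomain (· ∈ U) b, hS2 s b hb, ?_⟩
      have := subtypeDomain_mono (P := (· ∈ U)) hble
      rw [Finsupp.subtypeDomain_add, Finsupp.subtypeDomain_extendDomain] at this
      exact this
  · rintro ⟨t', ht'⟩
    refine ⟨t'.extendDomain + s • χ, fun c => ?_⟩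
    constructor
    · rintro ⟨b, hb, hble⟩
      have hble' : Finsupp.subtypeDomain (· ∈ U) b ≤ Finsupp.subtypeDomain (· ∈ U) c + t' := by
        have := subtypeDomain_mono (P := (· ∈ U)) hble
        rw [Finsupp.subtypeDomain_add, Finsupp.subtypeDomain_add,
          Finsupp.subtypeDomain_extendDomain] at this
        have hsχ : Finsupp.subtypeDomain (· ∈ U) (s • χ) = 0 := by
          ext a
          rw [Finsupp.subtypeDomain_apply, Finsupp.smul_apply, hχ_not a.2]
          rfl
        rwa [hsχ, add_zero] at this
      obtain ⟨a', ha', hane⟩ := (ht' (Finsupp.subtypeDomain (· ∈ U) c)).mp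
        ⟨_, hS2 s b hb, hble'⟩
      refine ⟨(a' : σ), Finset.mem_subtype.mp ha', ?_⟩
      rwa [Finsupp.subtypeDomain_apply] at hane
    · rintro ⟨a, haF, hane⟩
      have haU : a ∈ U := hFU haF
      obtain ⟨b', hb', hble⟩ := (ht' (Finsupp.subtypeDomain (· ∈ U) c)).mpr
        ⟨⟨a, haU⟩, Finset.mem_subtype.mpr haF, by rwa [Finsupp.subtypeDomain_apply]⟩
      refine ⟨b'.extendDomain + s • χ, hS1 s b' hb', ?_⟩
      calc b'.extendDomain + s • χ
          ≤ (Finsupp.subtypeDomain (· ∈ U) c + t').extendDomain + s • χ :=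
            add_le_add_left (extendDomain_mono hble) _
        _ = (Finsupp.subtypeDomain (· ∈ U) c).extendDomain + t'.extendDomain + s • χ := by
            rw [extendDomain_add]
        _ ≤ c + t'.extendDomain + s • χ :=
            add_le_add_left (add_le_add_left (extendDomain_subtypeDomain_le c) _) _
        _ = c + (t'.extendDomain + s • χ) := by abel


end AssocAux

/-- For `F ⊆ U ⊆ V`, `p_F ∈ Ass(R/J(H)^s)` iff
`p_F ∈ Ass(K[U]/J(H_U)^s)`, where `H_U` is the induced subhypergraph on `U`. -/
theorem isAssociatedPrime_iff_isAssociatedPrime_induced {σ K : Type*} [DecidableEq σ] [Field K]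
    (H : FinHypergraph σ) (U F : Finset σ) (hFU : F ⊆ U) (hUV : U ⊆ H.V) (s : ℕ) :
    IsAssociatedPrimeOld (primeOf K F) (MvPolynomial σ K ⧸ (coverIdeal K H.E) ^ s) ↔
      IsAssociatedPrimeOld (primeOf K (F.subtype (· ∈ U)))
        (MvPolynomial {x : σ // x ∈ U} K ⧸
          (smallCover K U (H.E.filter (fun e => e ⊆ U))) ^ s) := by
  classical
  rw [AssocAux.isAssociatedPrime_quotient_iff, AssocAux.isAssociatedPrime_quotient_iff]
  simp only [AssocAux.primeOf_isPrime, true_and]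
  have h1 : (coverIdeal K H.E) ^ s
      = AssocAux.monoIdeal K (AssocAux.sumset s {u : σ →₀ ℕ | ∀ e ∈ H.E, ∃ v ∈ e, u v ≠ 0}) := by
    rw [coverIdeal, AssocAux.iInf_primeOf_eq H.E (fun e => e), AssocAux.monoIdeal_pow]
  have h2 : (smallCover K U (H.E.filter (fun e => e ⊆ U))) ^ s
      = AssocAux.monoIdeal K (AssocAux.sumset s {u : {x : σ // x ∈ U} →₀ ℕ |
          ∀ e ∈ H.E.filter (fun e => e ⊆ U), ∃ v ∈ e.subtype (· ∈ U), u v ≠ 0}) := by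
    rw [smallCover, AssocAux.iInf_primeOf_eq (H.E.filter (fun e => e ⊆ U))
      (fun e => e.subtype (· ∈ U)), AssocAux.monoIdeal_pow]
  rw [h1, h2, AssocAux.exists_colon_eq_iff, AssocAux.exists_colon_eq_iff]
  exact AssocAux.combinatorial_core H.V U F H.E hFU hUV H.edge_sub s
end
end

section
/- Let H=(V,E) be a hypergraph and H'=(V',E') a shadow of H such that e_i ∩ e_j ⊆ V' for all distinct edges e_i, e_j of H. If the maximal ideal p_V is an associated prime of J(H)^2, then the maximal ideal p_{V'} is an associated prime of J(H')^2. -/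
open MvPolynomial
open Pointwise

noncomputable section

namespace ShadowAux

variable {σ : Type*} {K : Type*} [Field K]

/-- set-level cover -/
def SCov (E : Finset (Finset σ)) (C : Finset σ) : Prop := ∀ e ∈ E, ∃ v ∈ e, v ∈ C


variable {σ : Type*} {K : Type*} [Field K]


theorem mem_biInf_primeOf {ι : Type*} (S : Finset ι) (g : ι → Finset σ)
    (f : MvPolynomial σ K) :
    f ∈ (⨅ e ∈ S, primeOf K (g e)) ↔
      ∀ u ∈ f.support, ∀ e ∈ S, ∃ v ∈ g e, u v ≠ 0 := by
  simp only [primeOf, Ideal.mem_iInf]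
  constructor
  · intro h u hu e he
    exact (mem_ideal_span_X_image.mp (h e he)) u hu |>.imp fun v hv =>
      ⟨Finset.mem_coe.mp hv.1, hv.2⟩
  · intro h e he
    exact mem_ideal_span_X_image.mpr fun u hu =>
      (h u hu e he).imp fun v hv => ⟨Finset.mem_coe.mpr hv.1, hv.2⟩

theorem biInf_primeOf_eq_span {ι : Type*} (S : Finset ι) (g : ι → Finset σ) :
    (⨅ e ∈ S, primeOf K (g e)) =
      Ideal.span ((fun c => monomial c (1 : K)) ''
        {c : σ →₀ ℕ | ∀ e ∈ S, ∃ v ∈ g e, c v ≠ 0}) := by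
  ext f
  rw [mem_biInf_primeOf, mem_ideal_span_monomial_image]
  constructor
  · intro h u hu
    exact ⟨u, h u hu, le_rfl⟩
  · intro h u hu e he
    obtain ⟨c, hc, hcu⟩ := h u hu
    obtain ⟨v, hv, hcv⟩ := hc e he
    exact ⟨v, hv, fun h0 => hcv (Nat.le_zero.mp (h0 ▸ Finsupp.le_def.mp hcu v))⟩

theorem mem_sq_biInf {ι : Type*} (S : Finset ι) (g : ι → Finset σ)
    (f : MvPolynomial σ K) :
    f ∈ (⨅ e ∈ S, primeOf K (g e)) ^ 2 ↔
      ∀ u ∈ f.support, ∃ c d : σ →₀ ℕ,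
        (∀ e ∈ S, ∃ v ∈ g e, c v ≠ 0) ∧ (∀ e ∈ S, ∃ v ∈ g e, d v ≠ 0) ∧ c + d ≤ u := by
  set T : Set (σ →₀ ℕ) := {c : σ →₀ ℕ | ∀ e ∈ S, ∃ v ∈ g e, c v ≠ 0} with hT
  have himg : (((fun c => monomial c (1:K)) '' T) * ((fun c => monomial c (1:K)) '' T) : Set _)
      = (fun c => monomial c (1:K)) '' {u | ∃ c ∈ T, ∃ d ∈ T, u = c + d} := by
    ext z
    simp only [Set.mem_mul, Set.mem_image, Set.mem_setOf_eq]
    constructor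
    · rintro ⟨_, ⟨c, hc, rfl⟩, _, ⟨d, hd, rfl⟩, rfl⟩
      exact ⟨c + d, ⟨c, hc, d, hd, rfl⟩, by rw [monomial_mul, one_mul]⟩
    · rintro ⟨u, ⟨c, hc, d, hd, rfl⟩, rfl⟩
      exact ⟨monomial c 1, ⟨c, hc, rfl⟩, monomial d 1, ⟨d, hd, rfl⟩, by
        rw [monomial_mul, one_mul]⟩
  rw [sq, biInf_primeOf_eq_span, ← hT, Ideal.span_mul_span', himg,
    mem_ideal_span_monomial_image]
  constructor
  · intro h u hu
    obtain ⟨w, ⟨c, hc, d, hd, rfl⟩, hle⟩ := h u hu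
    exact ⟨c, d, hc, hd, hle⟩
  · intro h u hu
    obtain ⟨c, d, hc, hd, hle⟩ := h u hu
    exact ⟨c + d, ⟨c, hc, d, hd, rfl⟩, hle⟩

theorem exists_exponent {ι : Type*} (S : Finset ι) (g : ι → Finset σ) (V : Finset σ)
    (h : IsAssociatedPrime (primeOf K V)
      (MvPolynomial σ K ⧸ (⨅ e ∈ S, primeOf K (g e)) ^ 2)) :
    ∃ a : σ →₀ ℕ,
      (¬ ∃ c d : σ →₀ ℕ, (∀ e ∈ S, ∃ v ∈ g e, c v ≠ 0) ∧
          (∀ e ∈ S, ∃ v ∈ g e, d v ≠ 0) ∧ c + d ≤ a) ∧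
      (∀ i ∈ V, ∃ c d : σ →₀ ℕ, (∀ e ∈ S, ∃ v ∈ g e, c v ≠ 0) ∧
          (∀ e ∈ S, ∃ v ∈ g e, d v ≠ 0) ∧ c + d ≤ Finsupp.single i 1 + a) := by
  classical
  obtain ⟨hp, x, hx⟩ := h
  obtain ⟨f, rfl⟩ := Ideal.Quotient.mk_surjective x
  let Q : (σ →₀ ℕ) → Prop := fun u => ∃ c d : σ →₀ ℕ, (∀ e ∈ S, ∃ v ∈ g e, c v ≠ 0) ∧
      (∀ e ∈ S, ∃ v ∈ g e, d v ≠ 0) ∧ c + d ≤ u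
  have hQmono : ∀ u u', u ≤ u' → Q u → Q u' := by
    rintro u u' huu ⟨c, d, hc, hd, hle⟩
    exact ⟨c, d, hc, hd, hle.trans huu⟩
  have hf : f ∉ (⨅ e ∈ S, primeOf K (g e)) ^ 2 := by
    intro hf
    apply hp.ne_top
    rw [Ideal.eq_top_iff_one, hx]
    apply Ideal.le_radical
    exact Submodule.mem_colon_singleton.mpr ((Submodule.mem_bot _).mpr
      (by rw [one_smul]; exact Ideal.Quotient.eq_zero_iff_mem.mpr hf))
  rw [mem_sq_biInf] at hf
  push_neg at hf
  obtain ⟨a, ha, hano⟩ := hf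
  have hα : ¬ Q a := by
    rintro ⟨c, d, hc, hd, hle⟩
    exact (hano c d hc hd) hle
  have hk : ∀ i ∈ V, ∃ k : ℕ, Q (Finsupp.single i k + a) := by
    intro i hi
    have hXi : (X i : MvPolynomial σ K) ∈ primeOf K V :=
      Ideal.subset_span ⟨i, Finset.mem_coe.mpr hi, rfl⟩
    rw [hx] at hXi
    obtain ⟨n, hn⟩ := hXi
    have hn' : X i ^ n * f ∈ (⨅ e ∈ S, primeOf K (g e)) ^ 2 := by
      rw [← Ideal.Quotient.eq_zero_iff_mem]
      exact (Submodule.mem_bot _).mp (Submodule.mem_colon_singleton.mp hn)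
    rw [mem_sq_biInf] at hn'
    refine ⟨n, hn' (Finsupp.single i n + a) ?_⟩
    rw [mem_support_iff, X_pow_eq_monomial, coeff_monomial_mul, one_mul]
    exact mem_support_iff.mp ha
  choose! k hk using hk
  by_contra hcon
  have hstep : ∀ u, ¬ Q u → ∃ i ∈ V, ¬ Q (Finsupp.single i 1 + u) := by
    intro u hu
    by_contra h'
    apply hcon
    refine ⟨u, hu, fun i hi => ?_⟩
    by_contra h''
    exact h' ⟨i, hi, h''⟩
  have hchain : ∀ n : ℕ, ∃ t : σ →₀ ℕ, (∀ i, i ∉ V → t i = 0) ∧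
      ∑ i ∈ V, t i = n ∧ ¬ Q (t + a) := by
    intro n
    induction n with
    | zero => exact ⟨0, fun _ _ => rfl, by simp, by rw [zero_add]; exact hα⟩
    | succ n ih =>
      obtain ⟨t, ht0, hts, htQ⟩ := ih
      obtain ⟨i, hi, hiQ⟩ := hstep (t + a) htQ
      refine ⟨Finsupp.single i 1 + t, ?_, ?_, ?_⟩
      · intro j hj
        rw [Finsupp.add_apply, Finsupp.single_apply, if_neg (fun (h : i = j) => hj (h ▸ hi)), ht0 j hj]
      · rw [Finset.sum_congr rfl (fun j _ => Finsupp.add_apply _ _ j), Finset.sum_add_distrib, hts,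
          Finset.sum_eq_single_of_mem i hi (fun j _ hji => by
            rw [Finsupp.single_apply, if_neg (fun h => hji h.symm)]),
          Finsupp.single_eq_same]
        omega
      · rw [add_assoc]; exact hiQ
  obtain ⟨t, ht0, hts, htQ⟩ := hchain (∑ i ∈ V, k i + 1)
  have hex : ∃ i ∈ V, k i ≤ t i := by
    by_contra hno
    push_neg at hno
    have : ∑ i ∈ V, t i ≤ ∑ i ∈ V, k i := Finset.sum_le_sum (fun i hi => (hno i hi).le)
    omega
  obtain ⟨i, hi, hki⟩ := hex
  apply htQ
  refine hQmono _ _ ?_ (hk i hi)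
  rw [Finsupp.le_def]
  intro v
  rw [Finsupp.add_apply, Finsupp.add_apply, Finsupp.single_apply]
  split
  · next h => subst h; omega
  · omega



variable [DecidableEq σ]

/-- indicator finsupp of a finset -/
def ind (C : Finset σ) : σ →₀ ℕ := C.val.toFinsupp

theorem ind_apply (C : Finset σ) (v : σ) : ind C v = if v ∈ C then 1 else 0 := by
  rw [ind, Multiset.toFinsupp_apply, Multiset.count_eq_of_nodup C.nodup]
  exact if_congr Finset.mem_val.to_iff rfl rfl

theorem exists_minCov (E : Finset (Finset σ)) :
    ∀ C : Finset σ, SCov E C →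
      ∃ C₀, C₀ ⊆ C ∧ SCov E C₀ ∧ ∀ v ∈ C₀, ∃ e ∈ E, C₀ ∩ e = {v} := by
  intro C
  induction C using Finset.strongInduction with
  | _ C IH =>
    intro hC
    by_cases hmin : ∀ v ∈ C, ∃ e ∈ E, C ∩ e = {v}
    · exact ⟨C, Finset.Subset.refl C, hC, hmin⟩
    · push_neg at hmin
      obtain ⟨v, hv, hvmin⟩ := hmin
      have hC' : SCov E (C.erase v) := by
        intro e he
        obtain ⟨w, hwe, hwC⟩ := hC e he
        by_cases hwv : w = v
        · subst hwv
          have hne2 : ¬ C ∩ e ⊆ {w} := by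
            intro hsub
            exact hvmin e he (Finset.Subset.antisymm hsub
              (Finset.singleton_subset_iff.mpr (Finset.mem_inter.mpr ⟨hwC, hwe⟩)))
          obtain ⟨x, hx, hxw⟩ := Finset.not_subset.mp hne2
          exact ⟨x, (Finset.mem_inter.mp hx).2,
            Finset.mem_erase.mpr ⟨by simpa using hxw, (Finset.mem_inter.mp hx).1⟩⟩
        · exact ⟨w, hwe, Finset.mem_erase.mpr ⟨hwv, hwC⟩⟩
      obtain ⟨C₀, hsub, h1, h2⟩ := IH (C.erase v) (Finset.erase_ssubset hv) hC'
      exact ⟨C₀, hsub.trans (Finset.erase_subset _ _), h1, h2⟩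

theorem combo (E : Finset (Finset σ)) (V A V' : Finset σ)
    (hEV : ∀ e ∈ E, e ⊆ V)
    (hanti : ∀ e ∈ E, ∀ f ∈ E, e ⊆ f → e = f)
    (hne : ∀ e ∈ E, (e ∩ V').Nonempty)
    (hint : ∀ e ∈ E, ∀ f ∈ E, e ≠ f → e ∩ f ⊆ V')
    (hV'V : V' ⊆ V)
    (hAV : A ⊆ V)
    (hα : ¬ ∃ C D : Finset σ, SCov E C ∧ SCov E D ∧ Disjoint C D ∧ C ∪ D ⊆ A)
    (hβ : ∀ i ∈ V, ∃ C D : Finset σ, SCov E C ∧ SCov E D ∧ C ∪ D ⊆ A ∪ {i} ∧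
        C ∩ D ⊆ {i} ∧ (i ∈ C ∩ D → i ∈ A)) :
    ∃ B : Finset σ, B ⊆ V' ∧
      (¬ ∃ C D : Finset σ, SCov E C ∧ SCov E D ∧ Disjoint C D ∧ C ∪ D ⊆ B) ∧
      (∀ i ∈ V', ∃ C D : Finset σ, SCov E C ∧ SCov E D ∧ C ∪ D ⊆ B ∪ {i} ∧
        C ∩ D ⊆ {i} ∧ (i ∈ C ∩ D → i ∈ B)) ∧
      (∀ e₁ ∈ E, ∀ e₂ ∈ E, e₁ ∩ V' = e₂ ∩ V' → e₁ = e₂) := by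
  -- helper to extract membership in A from C ∪ D ⊆ A ∪ {i}
  have hmemA : ∀ {A' C D : Finset σ} {i x : σ}, C ∪ D ⊆ A' ∪ {i} → x ∈ C ∪ D → x ≠ i → x ∈ A' := by
    intro A' C D i x hsub hx hxi
    rcases Finset.mem_union.mp (hsub hx) with h | h
    · exact h
    · exact absurd (Finset.mem_singleton.mp h) hxi
  by_cases hE0 : E = ∅
  · exfalso
    refine hα ⟨∅, ∅, ?_, ?_, Finset.disjoint_empty_left _, by simp⟩ <;>
      · intro e he; rw [hE0] at he; exact absurd he (Finset.notMem_empty e)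
  by_cases htwo : ∃ e₁ ∈ E, ∃ e₂ ∈ E, e₁ ≠ e₂
  · -- main case: at least two edges
    have L1 : ∀ e ∈ E, ∃ x ∈ A ∩ e, ∃ y ∈ A ∩ e, x ≠ y := by
      intro e he
      obtain ⟨e₁, he₁, e₂, he₂, h12⟩ := htwo
      obtain ⟨f, hf, hfe⟩ : ∃ f ∈ E, f ≠ e := by
        by_cases h : e₁ = e
        · exact ⟨e₂, he₂, fun hh => h12 (h.trans hh.symm)⟩
        · exact ⟨e₁, he₁, h⟩
      have hnsub : ¬ f ⊆ e := fun hsub => hfe (hanti f hf e he hsub)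
      obtain ⟨j, hjf, hje⟩ := Finset.not_subset.mp hnsub
      obtain ⟨C, D, hC, hD, hsub, hCD, _⟩ := hβ j (hEV f hf hjf)
      obtain ⟨x, hxe, hxC⟩ := hC e he
      obtain ⟨y, hye, hyD⟩ := hD e he
      have hxj : x ≠ j := fun h => hje (h ▸ hxe)
      have hyj : y ≠ j := fun h => hje (h ▸ hye)
      have hxA : x ∈ A := hmemA hsub (Finset.mem_union_left _ hxC) hxj
      have hyA : y ∈ A := hmemA hsub (Finset.mem_union_right _ hyD) hyj
      refine ⟨x, Finset.mem_inter.mpr ⟨hxA, hxe⟩, y, Finset.mem_inter.mpr ⟨hyA, hye⟩, ?_⟩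
      intro h
      exact hxj (Finset.mem_singleton.mp (hCD (Finset.mem_inter.mpr ⟨hxC, h ▸ hyD⟩)))
    have L2 : ∀ u ∈ A, ∃ e ∈ E, ∃ f ∈ E, e ≠ f ∧ u ∈ e ∧ u ∈ f := by
      intro u huA
      by_contra huniq
      have huniq2 : ∀ e ∈ E, u ∈ e → ∀ f ∈ E, u ∈ f → e = f := by
        intro e he hue f hf huf
        by_contra hef
        exact huniq ⟨e, he, f, hf, hef, hue, huf⟩
      obtain ⟨C, D, hC, hD, hsub, hCD, _⟩ := hβ u (hAV huA)
      have hAu : A ∪ {u} = A := by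
        rw [Finset.union_eq_left]
        exact Finset.singleton_subset_iff.mpr huA
      rw [hAu] at hsub
      obtain ⟨C₀, hC₀sub, hC₀, hC₀min⟩ := exists_minCov E C hC
      obtain ⟨D₀, hD₀sub, hD₀, hD₀min⟩ := exists_minCov E D hD
      have hCA : C₀ ⊆ A := fun x hx => hsub (Finset.mem_union_left _ (hC₀sub hx))
      have hDA : D₀ ⊆ A := fun x hx => hsub (Finset.mem_union_right _ (hD₀sub hx))
      have hC₀D₀ : ∀ x, x ∈ C₀ → x ∈ D₀ → x = u := fun x hx hy =>
        Finset.mem_singleton.mp (hCD (Finset.mem_inter.mpr ⟨hC₀sub hx, hD₀sub hy⟩))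
      have hnd : ¬ Disjoint C₀ D₀ := by
        intro hd
        exact hα ⟨C₀, D₀, hC₀, hD₀, hd, Finset.union_subset hCA hDA⟩
      obtain ⟨w, hwC₀, hwD₀⟩ := Finset.not_disjoint_iff.mp hnd
      have hwu := hC₀D₀ w hwC₀ hwD₀
      subst hwu
      obtain ⟨e, he, hCe⟩ := hC₀min w hwC₀
      obtain ⟨e', he', hDe'⟩ := hD₀min w hwD₀
      have hue : w ∈ e := by
        have h2 : w ∈ C₀ ∩ e := by rw [hCe]; exact Finset.mem_singleton_self w
        exact (Finset.mem_inter.mp h2).2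
      have hue' : w ∈ e' := by
        have h2 : w ∈ D₀ ∩ e' := by rw [hDe']; exact Finset.mem_singleton_self w
        exact (Finset.mem_inter.mp h2).2
      have hee' : e = e' := huniq2 e he hue e' he' hue'
      subst hee'
      obtain ⟨x, hx, y, hy, hxy⟩ := L1 e he
      obtain ⟨z, hzAe, hzu⟩ : ∃ z ∈ A ∩ e, z ≠ w := by
        by_cases hxu : x = w
        · exact ⟨y, hy, fun h => hxy (by rw [hxu, h])⟩
        · exact ⟨x, hx, hxu⟩
      have hzA := (Finset.mem_inter.mp hzAe).1
      have hze := (Finset.mem_inter.mp hzAe).2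
      have hzC₀ : z ∉ C₀ := by
        intro h
        have h2 : z ∈ C₀ ∩ e := Finset.mem_inter.mpr ⟨h, hze⟩
        rw [hCe] at h2
        exact hzu (Finset.mem_singleton.mp h2)
      have hzD₀ : z ∉ D₀ := by
        intro h
        have h2 : z ∈ D₀ ∩ e := Finset.mem_inter.mpr ⟨h, hze⟩
        rw [hDe'] at h2
        exact hzu (Finset.mem_singleton.mp h2)
      refine hα ⟨insert z (C₀.erase w), D₀, ?_, hD₀, ?_, ?_⟩
      · intro f hf
        obtain ⟨t, htf, htC₀⟩ := hC₀ f hf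
        by_cases htu : t = w
        · refine ⟨z, ?_, Finset.mem_insert_self z _⟩
          rw [huniq2 f hf (htu ▸ htf) e he hue]
          exact hze
        · exact ⟨t, htf, Finset.mem_insert_of_mem (Finset.mem_erase.mpr ⟨htu, htC₀⟩)⟩
      · rw [Finset.disjoint_left]
        intro x' hx' hx'D
        rcases Finset.mem_insert.mp hx' with h | h
        · exact hzD₀ (h ▸ hx'D)
        · exact (Finset.mem_erase.mp h).1 (hC₀D₀ x' (Finset.mem_of_mem_erase h) hx'D)
      · apply Finset.union_subset
        · intro x' hx'
          rcases Finset.mem_insert.mp hx' with h | h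
          · exact h ▸ hzA
          · exact hCA (Finset.mem_of_mem_erase h)
        · exact hDA
    have L3 : A ⊆ V' := by
      intro u huA
      obtain ⟨e, he, f, hf, hef, hue, huf⟩ := L2 u huA
      exact hint e he f hf hef (Finset.mem_inter.mpr ⟨hue, huf⟩)
    have L4 : ∀ e₁ ∈ E, ∀ e₂ ∈ E, e₁ ∩ V' = e₂ ∩ V' → e₁ = e₂ := by
      intro e₁ h₁ e₂ h₂ heq
      by_contra hne12
      have h1sub : ¬ e₁ ⊆ e₂ := fun h => hne12 (hanti _ h₁ _ h₂ h)
      obtain ⟨i, hie₁, hie₂⟩ := Finset.not_subset.mp h1sub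
      have hiV' : i ∉ V' := by
        intro h
        have hmm : i ∈ e₁ ∩ V' := Finset.mem_inter.mpr ⟨hie₁, h⟩
        rw [heq] at hmm
        exact hie₂ (Finset.mem_inter.mp hmm).1
      have hiuniq : ∀ f ∈ E, i ∈ f → f = e₁ := by
        intro f hf hif
        by_contra hfe
        exact hiV' (hint f hf e₁ h₁ hfe (Finset.mem_inter.mpr ⟨hif, hie₁⟩))
      obtain ⟨C, D, hC, hD, hsub, hCD, _⟩ := hβ i (hEV e₁ h₁ hie₁)
      obtain ⟨C₀, hC₀sub, hC₀, hC₀min⟩ := exists_minCov E C hC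
      obtain ⟨D₀, hD₀sub, hD₀, hD₀min⟩ := exists_minCov E D hD
      have main : ∀ C' : Finset σ, SCov E C' → (∀ v ∈ C', ∃ e ∈ E, C' ∩ e = {v}) →
          C' ⊆ A ∪ {i} → i ∈ C' → False := by
        intro C' hcov hmin hsub' hiC'
        obtain ⟨f, hf, hpriv⟩ := hmin i hiC'
        have hif : i ∈ f := by
          have h2 : i ∈ C' ∩ f := by rw [hpriv]; exact Finset.mem_singleton_self i
          exact (Finset.mem_inter.mp h2).2
        have hfe₁ : f = e₁ := hiuniq f hf hif
        subst hfe₁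
        obtain ⟨v, hve₂, hvC'⟩ := hcov e₂ h₂
        have hvi : v ≠ i := fun h => hie₂ (h ▸ hve₂)
        have hvA : v ∈ A := by
          rcases Finset.mem_union.mp (hsub' hvC') with h | h
          · exact h
          · exact absurd (Finset.mem_singleton.mp h) hvi
        have hvV' : v ∈ V' := L3 hvA
        have hve₁ : v ∈ f := by
          have hmm : v ∈ e₂ ∩ V' := Finset.mem_inter.mpr ⟨hve₂, hvV'⟩
          rw [← heq] at hmm
          exact (Finset.mem_inter.mp hmm).1
        have h3 : v ∈ C' ∩ f := Finset.mem_inter.mpr ⟨hvC', hve₁⟩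
        rw [hpriv] at h3
        exact hvi (Finset.mem_singleton.mp h3)
      have hCs : C₀ ⊆ A ∪ {i} := fun x hx => hsub (Finset.mem_union_left _ (hC₀sub hx))
      have hDs : D₀ ⊆ A ∪ {i} := fun x hx => hsub (Finset.mem_union_right _ (hD₀sub hx))
      by_cases hiC : i ∈ C₀
      · exact main C₀ hC₀ hC₀min hCs hiC
      by_cases hiD : i ∈ D₀
      · exact main D₀ hD₀ hD₀min hDs hiD
      refine hα ⟨C₀, D₀, hC₀, hD₀, ?_, ?_⟩
      · rw [Finset.disjoint_left]
        intro x hxC hxD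
        have h4 : x = i :=
          Finset.mem_singleton.mp (hCD (Finset.mem_inter.mpr ⟨hC₀sub hxC, hD₀sub hxD⟩))
        exact hiC (h4 ▸ hxC)
      · apply Finset.union_subset
        · intro x hx
          exact hmemA (Finset.union_subset hCs hDs) (Finset.mem_union_left _ hx)
            (fun h => hiC (h ▸ hx))
        · intro x hx
          exact hmemA (Finset.union_subset hCs hDs) (Finset.mem_union_right _ hx)
            (fun h => hiD (h ▸ hx))
    exact ⟨A, L3, hα, fun i hi => hβ i (hV'V hi), L4⟩
  · -- single edge case
    obtain ⟨e, he⟩ := Finset.nonempty_iff_ne_empty.mpr hE0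
    have hEe : ∀ f ∈ E, f = e := by
      intro f hf
      by_contra hne'
      exact htwo ⟨f, hf, e, he, hne'⟩
    have heV : V ⊆ e := by
      intro i hi
      by_contra hie
      obtain ⟨C, D, hC, hD, hsub, hCD, _⟩ := hβ i hi
      obtain ⟨x, hxe, hxC⟩ := hC e he
      obtain ⟨y, hye, hyD⟩ := hD e he
      have hxi : x ≠ i := fun h => hie (h ▸ hxe)
      have hyi : y ≠ i := fun h => hie (h ▸ hye)
      have hxA : x ∈ A := hmemA hsub (Finset.mem_union_left _ hxC) hxi
      have hyA : y ∈ A := hmemA hsub (Finset.mem_union_right _ hyD) hyi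
      have hxy : x ≠ y := by
        intro h
        exact hxi (Finset.mem_singleton.mp (hCD (Finset.mem_inter.mpr ⟨hxC, h ▸ hyD⟩)))
      refine hα ⟨{x}, {y}, ?_, ?_, ?_, ?_⟩
      · intro f hf; rw [hEe f hf]; exact ⟨x, hxe, Finset.mem_singleton_self x⟩
      · intro f hf; rw [hEe f hf]; exact ⟨y, hye, Finset.mem_singleton_self y⟩
      · simpa [Finset.disjoint_singleton] using hxy
      · intro z hz
        rcases Finset.mem_union.mp hz with h | h
        · exact (Finset.mem_singleton.mp h) ▸ hxA
        · exact (Finset.mem_singleton.mp h) ▸ hyA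
    obtain ⟨w, hw⟩ := hne e he
    have hwe : w ∈ e := (Finset.mem_inter.mp hw).1
    have hwV' : w ∈ V' := (Finset.mem_inter.mp hw).2
    refine ⟨{w}, Finset.singleton_subset_iff.mpr hwV', ?_, ?_, ?_⟩
    · rintro ⟨C, D, hC, hD, hdisj, hsub⟩
      obtain ⟨x, _, hxC⟩ := hC e he
      obtain ⟨y, _, hyD⟩ := hD e he
      have hxw : x = w := Finset.mem_singleton.mp (hsub (Finset.mem_union_left _ hxC))
      have hyw : y = w := Finset.mem_singleton.mp (hsub (Finset.mem_union_right _ hyD))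
      exact Finset.disjoint_left.mp hdisj (hxw ▸ hxC) (hyw ▸ hyD)
    · intro i hi
      refine ⟨{w}, {i}, ?_, ?_, ?_, ?_, ?_⟩
      · intro f hf; rw [hEe f hf]; exact ⟨w, hwe, Finset.mem_singleton_self w⟩
      · intro f hf; rw [hEe f hf]
        exact ⟨i, heV (hV'V hi), Finset.mem_singleton_self i⟩
      · exact Finset.Subset.refl _
      · intro z hz
        exact Finset.mem_singleton.mpr (Finset.mem_singleton.mp (Finset.mem_inter.mp hz).2)
      · intro hz
        have : i = w := Finset.mem_singleton.mp (Finset.mem_inter.mp hz).1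
        exact Finset.mem_singleton.mpr this
    · intro e₁ h₁ e₂ h₂ _
      rw [hEe e₁ h₁, hEe e₂ h₂]


end ShadowAux

/-- Let `H'` be a shadow of `H` with `eᵢ ∩ eⱼ ⊆ V'` for all distinct edges of
`H`. If `p_V ∈ Ass(J(H)^2)` then `p_{V'} ∈ Ass(J(H')^2)` (in `K[V']`). -/
theorem maximal_assoc_shadow_of_maximal_assoc {σ K : Type*} [DecidableEq σ] [Field K]
    (H : FinHypergraph σ) (V' : Finset σ) (E' : Finset (Finset σ)) (hsh : IsShadow H V' E')
    (hint : ∀ e ∈ H.E, ∀ f ∈ H.E, e ≠ f → e ∩ f ⊆ V')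
    (h : IsAssociatedPrime (primeOf K H.V) (MvPolynomial σ K ⧸ (coverIdeal K H.E) ^ 2)) :
    IsAssociatedPrime (primeOf K V'.attach)
      (MvPolynomial {x : σ // x ∈ V'} K ⧸ (smallCover K V' E') ^ 2) := by
  classical
  obtain ⟨hV'V, hE'sub, hE'ne, hE'anti, hcard, himg⟩ := hsh
  obtain ⟨a, mα, mβ⟩ := ShadowAux.exists_exponent H.E (fun e => e) H.V h
  set U : Finset σ := H.E.biUnion id with hU
  have hUV : U ⊆ H.V := by
    intro v hv
    obtain ⟨e, he, hve⟩ := Finset.mem_biUnion.mp hv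
    exact H.edge_sub e he hve
  have hind1 : ∀ (S : Finset σ) (v : σ), ShadowAux.ind S v ≤ 1 := by
    intro S v; rw [ShadowAux.ind_apply]; split <;> omega
  have hindle : ∀ (w : σ →₀ ℕ) (v : σ), ShadowAux.ind (U.filter fun x => w x ≠ 0) v ≤ w v := by
    intro w v; rw [ShadowAux.ind_apply]
    split
    · next hmem => exact Nat.one_le_iff_ne_zero.mpr (Finset.mem_filter.mp hmem).2
    · exact Nat.zero_le _
  have hindcov : ∀ (w : σ →₀ ℕ), (∀ e ∈ H.E, ∃ v ∈ e, w v ≠ 0) →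
      ∀ e ∈ H.E, ∃ v ∈ e, ShadowAux.ind (U.filter fun x => w x ≠ 0) v ≠ 0 := by
    intro w hw e he
    obtain ⟨v, hv, hwv⟩ := hw e he
    refine ⟨v, hv, ?_⟩
    rw [ShadowAux.ind_apply,
      if_pos (Finset.mem_filter.mpr ⟨Finset.mem_biUnion.mpr ⟨e, he, show _ ∈ id e from hv⟩, hwv⟩)]
    exact one_ne_zero
  have ha1 : ∀ i ∈ H.V, a i ≤ 1 := by
    intro i hi
    by_contra h2
    push_neg at h2
    obtain ⟨c, d, hc, hd, hle⟩ := mβ i hi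
    apply mα
    refine ⟨ShadowAux.ind (U.filter fun v => c v ≠ 0),
      ShadowAux.ind (U.filter fun v => d v ≠ 0), hindcov c hc, hindcov d hd, ?_⟩
    rw [Finsupp.le_def]
    intro v
    rw [Finsupp.add_apply]
    have hlev := Finsupp.le_def.mp hle v
    simp only [Finsupp.add_apply, Finsupp.single_apply] at hlev
    have b1 := hindle c v
    have b2 := hindle d v
    have b3 := hind1 (U.filter fun x => c x ≠ 0) v
    have b4 := hind1 (U.filter fun x => d x ≠ 0) v
    by_cases hvi : v = i
    · subst hvi; omega
    · rw [if_neg (fun h => hvi h.symm)] at hlev; omega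
  set A : Finset σ := H.V.filter (fun v => a v ≠ 0) with hA
  have sα : ¬ ∃ C D : Finset σ, ShadowAux.SCov H.E C ∧ ShadowAux.SCov H.E D ∧
      Disjoint C D ∧ C ∪ D ⊆ A := by
    rintro ⟨C, D, hC, hD, hdisj, hsub⟩
    apply mα
    refine ⟨ShadowAux.ind C, ShadowAux.ind D, ?_, ?_, ?_⟩
    · intro e he
      obtain ⟨v, hv, hvC⟩ := hC e he
      exact ⟨v, hv, by rw [ShadowAux.ind_apply, if_pos hvC]; exact one_ne_zero⟩
    · intro e he
      obtain ⟨v, hv, hvD⟩ := hD e he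
      exact ⟨v, hv, by rw [ShadowAux.ind_apply, if_pos hvD]; exact one_ne_zero⟩
    · rw [Finsupp.le_def]
      intro v
      rw [Finsupp.add_apply, ShadowAux.ind_apply, ShadowAux.ind_apply]
      by_cases hvC : v ∈ C
      · have hvD : v ∉ D := Finset.disjoint_left.mp hdisj hvC
        have hav : a v ≠ 0 := (Finset.mem_filter.mp (hsub (Finset.mem_union_left _ hvC))).2
        rw [if_pos hvC, if_neg hvD]; omega
      · by_cases hvD : v ∈ D
        · have hav : a v ≠ 0 := (Finset.mem_filter.mp (hsub (Finset.mem_union_right _ hvD))).2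
          rw [if_neg hvC, if_pos hvD]; omega
        · rw [if_neg hvC, if_neg hvD]; omega
  have sβ : ∀ i ∈ H.V, ∃ C D : Finset σ, ShadowAux.SCov H.E C ∧ ShadowAux.SCov H.E D ∧
      C ∪ D ⊆ A ∪ {i} ∧ C ∩ D ⊆ {i} ∧ (i ∈ C ∩ D → i ∈ A) := by
    intro i hi
    obtain ⟨c, d, hc, hd, hle⟩ := mβ i hi
    have hlev : ∀ v, c v + d v ≤ (if i = v then 1 else 0) + a v := by
      intro v
      have := Finsupp.le_def.mp hle v
      simpa only [Finsupp.add_apply, Finsupp.single_apply] using this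
    refine ⟨U.filter (fun v => c v ≠ 0), U.filter (fun v => d v ≠ 0), ?_, ?_, ?_, ?_, ?_⟩
    · intro e he
      obtain ⟨v, hv, hcv⟩ := hc e he
      exact ⟨v, hv, Finset.mem_filter.mpr ⟨Finset.mem_biUnion.mpr ⟨e, he, show _ ∈ id e from hv⟩, hcv⟩⟩
    · intro e he
      obtain ⟨v, hv, hdv⟩ := hd e he
      exact ⟨v, hv, Finset.mem_filter.mpr ⟨Finset.mem_biUnion.mpr ⟨e, he, show _ ∈ id e from hv⟩, hdv⟩⟩
    · intro v hv
      by_cases hvi : v = i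
      · exact Finset.mem_union_right _ (Finset.mem_singleton.mpr hvi)
      · have hvU : v ∈ U := by
          rcases Finset.mem_union.mp hv with h | h
          · exact (Finset.mem_filter.mp h).1
          · exact (Finset.mem_filter.mp h).1
        have hav : a v ≠ 0 := by
          have h5 := hlev v
          rw [if_neg (fun h => hvi h.symm)] at h5
          rcases Finset.mem_union.mp hv with h | h
          · have := (Finset.mem_filter.mp h).2; omega
          · have := (Finset.mem_filter.mp h).2; omega
        exact Finset.mem_union_left _ (Finset.mem_filter.mpr ⟨hUV hvU, hav⟩)
    · intro v hv
      have h1 := (Finset.mem_filter.mp (Finset.mem_inter.mp hv).1).2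
      have h2 := (Finset.mem_filter.mp (Finset.mem_inter.mp hv).2).2
      have hvU := (Finset.mem_filter.mp (Finset.mem_inter.mp hv).1).1
      by_contra hvi
      rw [Finset.mem_singleton] at hvi
      have h5 := hlev v
      rw [if_neg (fun h => hvi h.symm)] at h5
      have := ha1 v (hUV hvU)
      omega
    · intro hiCD
      have h1 := (Finset.mem_filter.mp (Finset.mem_inter.mp hiCD).1).2
      have h2 := (Finset.mem_filter.mp (Finset.mem_inter.mp hiCD).2).2
      have h5 := hlev i
      rw [if_pos rfl] at h5
      exact Finset.mem_filter.mpr ⟨hi, by omega⟩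
  obtain ⟨B, hBV', oα, oβ, oinj⟩ := ShadowAux.combo H.E H.V A V' H.edge_sub H.simple
    (fun e he => hE'ne (e ∩ V') (himg e he)) hint hV'V (Finset.filter_subset _ _) sα sβ
  have hE'eq : E' = H.E.image fun e => e ∩ V' := by
    refine (Finset.eq_of_subset_of_card_le ?_ ?_).symm
    · intro x hx
      obtain ⟨e, he, rfl⟩ := Finset.mem_image.mp hx
      exact himg e he
    · rw [Finset.card_image_of_injOn
        (fun e₁ h₁ e₂ h₂ heq => oinj e₁ (Finset.mem_coe.mp h₁) e₂ (Finset.mem_coe.mp h₂) heq)]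
      exact le_of_eq hcard
  set b : {x : σ // x ∈ V'} →₀ ℕ := ShadowAux.ind (B.subtype fun x => x ∈ V') with hb
  have w1' : ¬ ∃ c d : {x : σ // x ∈ V'} →₀ ℕ,
      (∀ e ∈ E', ∃ v ∈ e.subtype fun x => x ∈ V', c v ≠ 0) ∧
      (∀ e ∈ E', ∃ v ∈ e.subtype fun x => x ∈ V', d v ≠ 0) ∧ c + d ≤ b := by
    rintro ⟨c, d, hc, hd, hle⟩
    apply oα
    have hble : ∀ v : {x : σ // x ∈ V'}, b v ≤ 1 := by
      intro v; rw [hb, ShadowAux.ind_apply]; split <;> omega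
    refine ⟨c.support.image Subtype.val, d.support.image Subtype.val, ?_, ?_, ?_, ?_⟩
    · intro e he
      obtain ⟨v, hv, hcv⟩ := hc (e ∩ V') (himg e he)
      have hv' : (v : σ) ∈ e ∩ V' := Finset.mem_subtype.mp hv
      exact ⟨v, (Finset.mem_inter.mp hv').1,
        Finset.mem_image.mpr ⟨v, Finsupp.mem_support_iff.mpr hcv, rfl⟩⟩
    · intro e he
      obtain ⟨v, hv, hdv⟩ := hd (e ∩ V') (himg e he)
      have hv' : (v : σ) ∈ e ∩ V' := Finset.mem_subtype.mp hv
      exact ⟨v, (Finset.mem_inter.mp hv').1,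
        Finset.mem_image.mpr ⟨v, Finsupp.mem_support_iff.mpr hdv, rfl⟩⟩
    · rw [Finset.disjoint_left]
      rintro x hx hx'
      obtain ⟨v, hvs, rfl⟩ := Finset.mem_image.mp hx
      obtain ⟨w, hws, hwv⟩ := Finset.mem_image.mp hx'
      have hwv' : w = v := Subtype.ext hwv
      subst hwv'
      have k1 := Finsupp.mem_support_iff.mp hvs
      have k2 := Finsupp.mem_support_iff.mp hws
      have k3 := Finsupp.le_def.mp hle w
      rw [Finsupp.add_apply] at k3
      have k4 := hble w
      omega
    · apply Finset.union_subset
      · intro x hx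
        obtain ⟨v, hvs, rfl⟩ := Finset.mem_image.mp hx
        have k1 := Finsupp.mem_support_iff.mp hvs
        have k3 := Finsupp.le_def.mp hle v
        rw [Finsupp.add_apply] at k3
        have k5 : b v ≠ 0 := by omega
        rw [hb, ShadowAux.ind_apply] at k5
        by_cases hm : v ∈ B.subtype fun x => x ∈ V'
        · exact Finset.mem_subtype.mp hm
        · rw [if_neg hm] at k5; exact absurd rfl k5
      · intro x hx
        obtain ⟨v, hvs, rfl⟩ := Finset.mem_image.mp hx
        have k1 := Finsupp.mem_support_iff.mp hvs
        have k3 := Finsupp.le_def.mp hle v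
        rw [Finsupp.add_apply] at k3
        have k5 : b v ≠ 0 := by omega
        rw [hb, ShadowAux.ind_apply] at k5
        by_cases hm : v ∈ B.subtype fun x => x ∈ V'
        · exact Finset.mem_subtype.mp hm
        · rw [if_neg hm] at k5; exact absurd rfl k5
  have w1 : monomial b (1:K) ∉ (smallCover K V' E') ^ 2 := by
    intro hmem
    have hbs : b ∈ (monomial b (1:K)).support := by
      rw [mem_support_iff, coeff_monomial, if_pos rfl]; exact one_ne_zero
    obtain ⟨c, d, hc, hd, hle⟩ :=
      (ShadowAux.mem_sq_biInf E' (fun e => e.subtype fun x => x ∈ V') _).mp hmem b hbs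
    exact w1' ⟨c, d, hc, hd, hle⟩
  have w2 : ∀ j : {x : σ // x ∈ V'},
      (X j : MvPolynomial {x : σ // x ∈ V'} K) * monomial b 1 ∈ (smallCover K V' E') ^ 2 := by
    intro j
    obtain ⟨C, D, hC, hD, hsub, hCD, hmemi⟩ := oβ (j : σ) j.2
    have hCV' : ∀ x ∈ C ∪ D, x ∈ V' := by
      intro x hx
      rcases Finset.mem_union.mp (hsub hx) with h | h
      · exact hBV' h
      · exact (Finset.mem_singleton.mp h) ▸ j.2
    have hXmono : (X j : MvPolynomial {x : σ // x ∈ V'} K) * monomial b 1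
        = monomial (Finsupp.single j 1 + b) 1 := by
      rw [X, monomial_mul, one_mul]
    rw [hXmono]
    apply (ShadowAux.mem_sq_biInf E' (fun e => e.subtype fun x => x ∈ V') _).mpr
    intro u hu
    rw [support_monomial, if_neg one_ne_zero, Finset.mem_singleton] at hu
    subst hu
    refine ⟨ShadowAux.ind (C.subtype fun x => x ∈ V'),
      ShadowAux.ind (D.subtype fun x => x ∈ V'), ?_, ?_, ?_⟩
    · intro e' he'
      rw [hE'eq] at he'
      obtain ⟨e, he, rfl⟩ := Finset.mem_image.mp he'
      obtain ⟨v, hve, hvC⟩ := hC e he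
      have hvV' : v ∈ V' := hCV' v (Finset.mem_union_left _ hvC)
      refine ⟨⟨v, hvV'⟩, Finset.mem_subtype.mpr (Finset.mem_inter.mpr ⟨hve, hvV'⟩), ?_⟩
      rw [ShadowAux.ind_apply, if_pos (Finset.mem_subtype.mpr hvC)]
      exact one_ne_zero
    · intro e' he'
      rw [hE'eq] at he'
      obtain ⟨e, he, rfl⟩ := Finset.mem_image.mp he'
      obtain ⟨v, hve, hvD⟩ := hD e he
      have hvV' : v ∈ V' := hCV' v (Finset.mem_union_right _ hvD)
      refine ⟨⟨v, hvV'⟩, Finset.mem_subtype.mpr (Finset.mem_inter.mpr ⟨hve, hvV'⟩), ?_⟩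
      rw [ShadowAux.ind_apply, if_pos (Finset.mem_subtype.mpr hvD)]
      exact one_ne_zero
    · rw [Finsupp.le_def]
      intro w
      rw [Finsupp.add_apply, Finsupp.add_apply, Finsupp.single_apply,
        ShadowAux.ind_apply, ShadowAux.ind_apply, hb, ShadowAux.ind_apply]
      rw [if_congr (Finset.mem_subtype (a := w)) rfl rfl,
        if_congr (Finset.mem_subtype (a := w)) rfl rfl,
        if_congr (Finset.mem_subtype (a := w)) rfl rfl]
      by_cases hwC : (w : σ) ∈ C
      · by_cases hwD : (w : σ) ∈ D
        · have h5 : (w : σ) ∈ C ∩ D := Finset.mem_inter.mpr ⟨hwC, hwD⟩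
          have h6 : (w : σ) = (j : σ) := Finset.mem_singleton.mp (hCD h5)
          have h7 : j = w := Subtype.ext h6.symm
          have h8 : (w : σ) ∈ B := by
            have := hmemi (h6 ▸ h5)
            exact h6.symm ▸ this
          rw [if_pos hwC, if_pos hwD, if_pos h7, if_pos h8]
        · by_cases hwB : (w : σ) ∈ B
          · rw [if_pos hwC, if_neg hwD, if_pos hwB]; omega
          · have h6 : (w : σ) = (j : σ) := by
              rcases Finset.mem_union.mp (hsub (Finset.mem_union_left _ hwC)) with h | h
              · exact absurd h hwB
              · exact Finset.mem_singleton.mp h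
            rw [if_pos hwC, if_neg hwD, if_pos (Subtype.ext h6.symm)]; omega
      · by_cases hwD : (w : σ) ∈ D
        · by_cases hwB : (w : σ) ∈ B
          · rw [if_neg hwC, if_pos hwD, if_pos hwB]; omega
          · have h6 : (w : σ) = (j : σ) := by
              rcases Finset.mem_union.mp (hsub (Finset.mem_union_right _ hwD)) with h | h
              · exact absurd h hwB
              · exact Finset.mem_singleton.mp h
            rw [if_neg hwC, if_pos hwD, if_pos (Subtype.ext h6.symm)]; omega
        · rw [if_neg hwC, if_neg hwD]; omega
  have hkerp : primeOf K V'.attach =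
      RingHom.ker (constantCoeff : MvPolynomial {x : σ // x ∈ V'} K →+* K) := by
    ext r
    rw [RingHom.mem_ker]
    constructor
    · intro hr
      by_contra h0
      have h0' : (0 : {x : σ // x ∈ V'} →₀ ℕ) ∈ r.support := by
        rw [mem_support_iff]
        exact h0
      obtain ⟨v, hv, hv0⟩ := (mem_ideal_span_X_image.mp hr) 0 h0'
      exact hv0 rfl
    · intro hr
      apply mem_ideal_span_X_image.mpr
      intro u hu
      have hune : u ≠ 0 := by
        intro hz
        rw [hz, mem_support_iff] at hu
        exact hu hr
      obtain ⟨v, hv⟩ := Finsupp.ne_iff.mp hune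
      exact ⟨v, Finset.mem_coe.mpr (Finset.mem_attach _ _), by simpa using hv⟩
  have hprime : (primeOf K V'.attach).IsPrime := by
    rw [hkerp]; exact RingHom.ker_isPrime _
  refine ⟨hprime, Ideal.Quotient.mk ((smallCover K V' E') ^ 2) (monomial b (1:K)), ?_⟩
  suffices hsuff : primeOf K V'.attach =
      (⊥ : Submodule _ (MvPolynomial {x : σ // x ∈ V'} K ⧸ (smallCover K V' E') ^ 2)).colon
        {Ideal.Quotient.mk ((smallCover K V' E') ^ 2) (monomial b (1:K))} by
    rw [← hsuff, hprime.radical]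
  ext r
  rw [Submodule.mem_colon_singleton, Submodule.mem_bot]
  have hsm : r • (Ideal.Quotient.mk ((smallCover K V' E') ^ 2) (monomial b (1:K)))
      = Ideal.Quotient.mk ((smallCover K V' E') ^ 2) (r * monomial b 1) := rfl
  rw [hsm, Ideal.Quotient.eq_zero_iff_mem]
  constructor
  · intro hr
    have hle : primeOf K V'.attach ≤
        ((smallCover K V' E') ^ 2).colon (Ideal.span {monomial b (1:K)}) := by
      apply Ideal.span_le.mpr
      rintro z ⟨j, hj, rfl⟩
      exact Ideal.mem_colon_span_singleton.mpr (w2 j)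
    exact Ideal.mem_colon_span_singleton.mp (hle hr)
  · intro hr
    rw [hkerp, RingHom.mem_ker]
    by_contra h0
    have hbmem : b ∈ (r * monomial b (1:K)).support := by
      rw [mem_support_iff]
      have hco : coeff (0 + b) (r * monomial b (1:K)) = coeff 0 r * 1 :=
        coeff_mul_monomial 0 b 1 r
      rw [zero_add, mul_one] at hco
      rw [hco]
      exact h0
    obtain ⟨c, d, hc, hd, hle⟩ :=
      (ShadowAux.mem_sq_biInf E' (fun e => e.subtype fun x => x ∈ V') _).mp hr b hbmem
    exact w1' ⟨c, d, hc, hd, hle⟩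
end
end

section
/- Under Notation (*): suppose (J(H')^s : m) = p_F is a prime ideal for some F ⊆ X and monomial m ∈ K[X]. Then no monomial involving only the variables in X∖F belongs to (J(H)^s : m); equivalently (J(H)^s : m) = p_F + q with q ⊆ (y). -/
open MvPolynomial

noncomputable section

/- Notation (*): `H = (V, E)` is a hypergraph with `V = X ∪ {y}` where `X = V \ {y}`;
`y` belongs to exactly one edge `e_y ∈ E`; `e := e_y \ {y}`;
`H' = (X, (E \ {e_y}) ∪ {e})` is the shadow of `H` on `X`, with edge set
`insert (ey.erase y) (H.E.erase ey)`; `H̃ = H_X` is the induced subhypergraph on `X`,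
with edge set `H.E.filter (· ⊆ H.V.erase y)`.  Cover ideals of `H'` and `H̃` are taken as
(cone) ideals of the ambient ring `K[V] = MvPolynomial σ K`, generated by the same monomials
as the corresponding ideals of `K[X]`. -/


lemma aeval_monomial_fixed {σ K : Type*} [Field K] (g : σ → MvPolynomial σ K)
    (a : σ →₀ ℕ) (h : ∀ i ∈ a.support, g i = X i) :
    aeval g (monomial a (1 : K)) = monomial a 1 := by
  rw [aeval_monomial, monomial_eq, map_one, C_1, one_mul, one_mul]
  exact Finsupp.prod_congr fun i hi => by rw [h i hi]

/-- Under Notation (*): if `(J(H')^s : m) = p_F` for some `F ⊆ X` and some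
monomial `m ∈ K[X]`, then no monomial involving only the variables of `X \ F` belongs to
`(J(H)^s : m)`. -/
theorem colon_shadow_prime_no_outside_monomial {σ K : Type*} [DecidableEq σ] [Field K]
    (H : FinHypergraph σ) (y : σ) (ey : Finset σ)
    (hyV : y ∈ H.V) (heyE : ey ∈ H.E) (hyey : y ∈ ey)
    (huniq : ∀ f ∈ H.E, y ∈ f → f = ey)
    (s : ℕ) (d : σ →₀ ℕ) (hd : d.support ⊆ H.V.erase y)
    (F : Finset σ) (hF : F ⊆ H.V.erase y)
    (hcolon : ((coverIdeal K (insert (ey.erase y) (H.E.erase ey))) ^ s).colon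
        (Ideal.span {(monomial d (1 : K) : MvPolynomial σ K)}) = primeOf K F) :
    ∀ c : σ →₀ ℕ, (c.support : Set σ) ⊆ ((H.V.erase y : Finset σ) : Set σ) \ (F : Set σ) →
      (monomial c (1 : K) : MvPolynomial σ K) ∉
        ((coverIdeal K H.E) ^ s).colon
          (Ideal.span {(monomial d (1 : K) : MvPolynomial σ K)}) := by
  intro c hc hmem
  have hyd : y ∉ d.support := fun h => (Finset.mem_erase.mp (hd h)).1 rfl
  have hc' : ∀ i ∈ c.support, i ≠ y ∧ i ∉ F := by
    intro i hi
    obtain ⟨h3, h4⟩ := hc (Finset.mem_coe.mpr hi)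
    exact ⟨(Finset.mem_erase.mp (Finset.mem_coe.mp h3)).1,
      fun hFm => h4 (Finset.mem_coe.mpr hFm)⟩
  set φ : MvPolynomial σ K →ₐ[K] MvPolynomial σ K :=
    aeval (fun i => if i = y then 0 else X i) with hφ
  -- the map φ sends the cover ideal of H into the cover ideal of the shadow
  have hmap : Ideal.map (φ : MvPolynomial σ K →+* MvPolynomial σ K) (coverIdeal K H.E)
      ≤ coverIdeal K (insert (ey.erase y) (H.E.erase ey)) := by
    refine le_iInf₂ fun f hf => ?_
    rw [Ideal.map_le_iff_le_comap]
    rcases Finset.mem_insert.mp hf with rfl | hf'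
    · refine le_trans (iInf₂_le ey heyE) ?_
      rw [primeOf, Ideal.span_le]
      rintro _ ⟨i, hi, rfl⟩
      simp only [SetLike.mem_coe, Ideal.mem_comap]
      by_cases h : i = y
      · subst h
        simp [hφ]
      · have hXi : φ (X i) = X i := by simp [hφ, h]
        show φ (X i) ∈ _
        rw [hXi]
        exact Ideal.subset_span ⟨i, Finset.mem_erase.mpr ⟨h, hi⟩, rfl⟩
    · have hyf : y ∉ f := fun h =>
        (Finset.mem_erase.mp hf').1 (huniq f (Finset.mem_of_mem_erase hf') h)
      refine le_trans (iInf₂_le f (Finset.mem_of_mem_erase hf')) ?_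
      rw [primeOf, Ideal.span_le]
      rintro _ ⟨i, hi, rfl⟩
      simp only [SetLike.mem_coe, Ideal.mem_comap]
      have hne : i ≠ y := fun h => hyf (h ▸ hi)
      have hXi : φ (X i) = X i := by simp [hφ, hne]
      show φ (X i) ∈ _
      rw [hXi]
      exact Ideal.subset_span ⟨i, hi, rfl⟩
  rw [Ideal.mem_colon_span_singleton] at hmem
  have hprod : (monomial c (1 : K) : MvPolynomial σ K) * monomial d 1 = monomial (c + d) 1 := by
    rw [monomial_mul, one_mul]
  rw [hprod] at hmem
  have hφm : φ (monomial (c + d) (1 : K)) = monomial (c + d) 1 := by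
    refine aeval_monomial_fixed _ _ (fun i hi => ?_)
    have hmem2 : i ∈ c.support ∪ d.support := Finsupp.support_add hi
    have hne : i ≠ y := by
      rcases Finset.mem_union.mp hmem2 with h | h
      · exact (hc' i h).1
      · exact fun e => hyd (e ▸ h)
    simp [hne]
  have hmem' : monomial (c + d) (1 : K) ∈
      (coverIdeal K (insert (ey.erase y) (H.E.erase ey))) ^ s := by
    have h1 : φ (monomial (c + d) (1 : K)) ∈
        Ideal.map (φ : MvPolynomial σ K →+* MvPolynomial σ K) ((coverIdeal K H.E) ^ s) :=
      Ideal.mem_map_of_mem _ hmem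
    rw [Ideal.map_pow, hφm] at h1
    exact Ideal.pow_right_mono hmap s h1
  have hcF : (monomial c (1 : K) : MvPolynomial σ K) ∈ primeOf K F := by
    rw [← hcolon, Ideal.mem_colon_span_singleton, hprod]
    exact hmem'
  -- derive a contradiction: kill the variables of F
  set ψ : MvPolynomial σ K →ₐ[K] MvPolynomial σ K :=
    aeval (fun i => if i ∈ F then 0 else X i) with hψ
  have hψc : ψ (monomial c (1 : K)) = monomial c 1 := by
    refine aeval_monomial_fixed _ _ (fun i hi => ?_)
    simp [(hc' i hi).2]
  have hψF : ψ (monomial c (1 : K)) = 0 := by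
    have hm : Ideal.map (ψ : MvPolynomial σ K →+* MvPolynomial σ K) (primeOf K F) ≤ ⊥ := by
      rw [Ideal.map_le_iff_le_comap, primeOf, Ideal.span_le]
      rintro _ ⟨i, hi, rfl⟩
      simp [Ideal.mem_comap, hψ, Finset.mem_coe.mp hi]
    have := hm (Ideal.mem_map_of_mem _ hcF)
    simpa using this
  rw [hψc] at hψF
  exact one_ne_zero ((MvPolynomial.monomial_eq_zero).mp hψF)
end
end

section
/- Under Notation (*): let (J(H')^s : m) = p for a monomial m ∈ K[X] and prime p. Then (J(H)^s : m) = p if and only if (J(H̃)^s : m) = p, where H̃ = H_X is the induced subhypergraph of H on X. -/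
open MvPolynomial

noncomputable section

/- Notation (*): `H = (V, E)` is a hypergraph with `V = X ∪ {y}` where `X = V \ {y}`;
`y` belongs to exactly one edge `e_y ∈ E`; `e := e_y \ {y}`;
`H' = (X, (E \ {e_y}) ∪ {e})` is the shadow of `H` on `X`, with edge set
`insert (ey.erase y) (H.E.erase ey)`; `H̃ = H_X` is the induced subhypergraph on `X`,
with edge set `H.E.filter (· ⊆ H.V.erase y)`.  Cover ideals of `H'` and `H̃` are taken as
(cone) ideals of the ambient ring `K[V] = MvPolynomial σ K`, generated by the same monomials
as the corresponding ideals of `K[X]`. -/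

lemma primeOf_mono {σ K : Type*} [Field K] {e f : Finset σ} (h : e ⊆ f) :
    primeOf K e ≤ primeOf K f :=
  Ideal.span_mono (Set.image_mono h)

lemma coverIdeal_anti {σ K : Type*} [Field K] {E₁ E₂ : Finset (Finset σ)} (h : E₁ ⊆ E₂) :
    coverIdeal K E₂ ≤ coverIdeal K E₁ :=
  le_iInf₂ fun e he => iInf₂_le e (h he)

lemma X_mem_primeOf {σ K : Type*} [Field K] {e : Finset σ} {i : σ} (h : i ∈ e) :
    (X i : MvPolynomial σ K) ∈ primeOf K e :=
  Ideal.subset_span ⟨i, h, rfl⟩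

lemma map_primeOf_le {σ K : Type*} [DecidableEq σ] [Field K] {f : Finset σ} {y : σ} (hy : y ∉ f) :
    Ideal.map (aeval (fun i => if i = y then 1 else X i) :
        MvPolynomial σ K →ₐ[K] MvPolynomial σ K).toRingHom (primeOf K f) ≤ primeOf K f := by
  rw [primeOf, Ideal.map_span, Ideal.span_le]
  rintro _ ⟨_, ⟨i, hi, rfl⟩, rfl⟩
  simp only [AlgHom.toRingHom_eq_coe, RingHom.coe_coe, aeval_X]
  rw [if_neg (show i ≠ y from fun h => hy (h ▸ hi))]
  exact X_mem_primeOf hi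

lemma aeval_monomial_of_not_mem {σ K : Type*} [DecidableEq σ] [Field K] {d : σ →₀ ℕ} {y : σ}
    (hy : y ∉ d.support) :
    (aeval (fun i => if i = y then 1 else X i) : MvPolynomial σ K →ₐ[K] MvPolynomial σ K)
      (monomial d 1) = monomial d 1 := by
  rw [aeval_monomial, map_one, one_mul]
  rw [monomial_eq, C_1, one_mul]
  refine Finsupp.prod_congr fun i hi => ?_
  rw [if_neg (show i ≠ y from fun h => hy (h ▸ hi))]


lemma coverIdeal_le_primeOf {σ K : Type*} [Field K] {E : Finset (Finset σ)} {f : Finset σ}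
    (hf : f ∈ E) : coverIdeal K E ≤ primeOf K f :=
  iInf₂_le f hf

lemma le_coverIdeal {σ K : Type*} [Field K] {E : Finset (Finset σ)}
    {I : Ideal (MvPolynomial σ K)} (h : ∀ f ∈ E, I ≤ primeOf K f) : I ≤ coverIdeal K E :=
  le_iInf₂ h

/-- Under Notation (*): let `(J(H')^s : m) = p` for a monomial `m ∈ K[X]`
and a prime `p`. Then `(J(H)^s : m) = p` if and only if `(J(H̃)^s : m) = p`. -/
theorem colon_eq_iff_colon_induced_eq {σ K : Type*} [DecidableEq σ] [Field K]
    (H : FinHypergraph σ) (y : σ) (ey : Finset σ)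
    (hyV : y ∈ H.V) (heyE : ey ∈ H.E) (hyey : y ∈ ey)
    (huniq : ∀ f ∈ H.E, y ∈ f → f = ey)
    (s : ℕ) (d : σ →₀ ℕ) (hd : d.support ⊆ H.V.erase y)
    (p : Ideal (MvPolynomial σ K)) (hp : p.IsPrime)
    (hcolon : ((coverIdeal K (insert (ey.erase y) (H.E.erase ey))) ^ s).colon
        (Ideal.span {(monomial d (1 : K) : MvPolynomial σ K)}) = p) :
    (((coverIdeal K H.E) ^ s).colon
        (Ideal.span {(monomial d (1 : K) : MvPolynomial σ K)}) = p ↔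
      ((coverIdeal K (H.E.filter (fun f => f ⊆ H.V.erase y))) ^ s).colon
        (Ideal.span {(monomial d (1 : K) : MvPolynomial σ K)}) = p) := by
  set m : MvPolynomial σ K := monomial d 1 with hm
  -- identify the filtered edge set with `H.E.erase ey`
  have hfilt : H.E.filter (fun f => f ⊆ H.V.erase y) = H.E.erase ey := by
    ext f
    simp only [Finset.mem_filter, Finset.mem_erase]
    constructor
    · rintro ⟨hf, hsub⟩
      refine ⟨fun h => ?_, hf⟩
      subst h
      exact (Finset.mem_erase.mp (hsub hyey)).1 rfl
    · rintro ⟨hne, hf⟩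
      refine ⟨hf, Finset.subset_erase.mpr ⟨H.edge_sub f hf, fun hyf => hne (huniq f hf hyf)⟩⟩
  rw [hfilt]
  set J' : Ideal (MvPolynomial σ K) := coverIdeal K (insert (ey.erase y) (H.E.erase ey)) with hJ'
  set JH : Ideal (MvPolynomial σ K) := coverIdeal K H.E with hJH
  set Jt : Ideal (MvPolynomial σ K) := coverIdeal K (H.E.erase ey) with hJt
  have hJ'leJt : J' ≤ Jt := coverIdeal_anti (Finset.subset_insert _ _)
  have hJHleJt : JH ≤ Jt := coverIdeal_anti (Finset.erase_subset _ _)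
  have hJ'leJH : J' ≤ JH := by
    refine le_coverIdeal fun f hf => ?_
    by_cases hfe : f = ey
    · subst hfe
      exact (coverIdeal_le_primeOf (Finset.mem_insert_self _ _)).trans
        (primeOf_mono (Finset.erase_subset _ _))
    · exact coverIdeal_le_primeOf (Finset.mem_insert_of_mem (Finset.mem_erase.mpr ⟨hfe, hf⟩))
  -- the variable X y is not in p
  have hXy : (X y : MvPolynomial σ K) ∉ p := by
    intro hXyp
    set φ := (aeval (fun i => if i = y then 1 else X i) :
        MvPolynomial σ K →ₐ[K] MvPolynomial σ K) with hφ
    have hmap : Ideal.map φ.toRingHom (J' ^ s) ≤ J' ^ s := by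
      rw [Ideal.map_pow]
      refine Ideal.pow_right_mono ?_ s
      refine le_coverIdeal fun f hf => ?_
      have hyf : y ∉ f := by
        rcases Finset.mem_insert.mp hf with h | h
        · exact h ▸ Finset.notMem_erase y ey
        · exact fun hyf => (Finset.mem_erase.mp h).1 (huniq f (Finset.mem_erase.mp h).2 hyf)
      exact le_trans (Ideal.map_mono (coverIdeal_le_primeOf hf)) (map_primeOf_le hyf)
    have hXym : X y * m ∈ J' ^ s := by
      rw [← hcolon] at hXyp
      exact Ideal.mem_colon_span_singleton.mp hXyp
    have hyd : y ∉ d.support := fun h => (Finset.mem_erase.mp (hd h)).1 rfl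
    have hφm : φ (X y * m) = m := by
      rw [map_mul, hm, aeval_monomial_of_not_mem hyd, hφ, aeval_X, if_pos rfl, one_mul]
    have hmJ' : m ∈ J' ^ s := by
      have := Ideal.mem_map_of_mem φ.toRingHom hXym
      rw [show φ.toRingHom (X y * m) = φ (X y * m) from rfl, hφm] at this
      exact hmap this
    have h1 : (1 : MvPolynomial σ K) ∈ p := by
      rw [← hcolon]
      exact Ideal.mem_colon_span_singleton.mpr (by rwa [one_mul])
    exact hp.ne_top (Ideal.eq_top_iff_one p |>.mpr h1)
  -- p ≤ (JH^s : m)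
  have hple : p ≤ (JH ^ s).colon (Ideal.span {m}) := by
    rw [← hcolon]
    intro u hu
    exact Ideal.mem_colon_span_singleton.mpr
      (Ideal.pow_right_mono hJ'leJH s (Ideal.mem_colon_span_singleton.mp hu))
  have hpleT : p ≤ (Jt ^ s).colon (Ideal.span {m}) := by
    rw [← hcolon]
    intro u hu
    exact Ideal.mem_colon_span_singleton.mpr
      (Ideal.pow_right_mono hJ'leJt s (Ideal.mem_colon_span_singleton.mp hu))
  constructor
  · intro hH
    refine le_antisymm ?_ hpleT
    intro u hu
    have hum : u * m ∈ Jt ^ s := Ideal.mem_colon_span_singleton.mp hu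
    -- X y * Jt ≤ JH
    have hmul : Ideal.span {(X y : MvPolynomial σ K)} * Jt ≤ JH := by
      refine le_coverIdeal fun f hf => ?_
      by_cases hfe : f = ey
      · subst hfe
        refine le_trans Ideal.mul_le_left ?_
        rw [Ideal.span_le, Set.singleton_subset_iff]
        exact X_mem_primeOf hyey
      · exact le_trans Ideal.mul_le_right (coverIdeal_le_primeOf (Finset.mem_erase.mpr ⟨hfe, hf⟩))
    have hXsu : (X y : MvPolynomial σ K) ^ s * (u * m) ∈ JH ^ s := by
      have h1 : (X y : MvPolynomial σ K) ^ s ∈ (Ideal.span {(X y : MvPolynomial σ K)}) ^ s :=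
        Ideal.pow_mem_pow (Ideal.mem_span_singleton_self _) s
      have h2 := Ideal.mul_mem_mul h1 hum
      rw [← mul_pow] at h2
      exact Ideal.pow_right_mono hmul s h2
    have : (X y : MvPolynomial σ K) ^ s * u ∈ p := by
      rw [← hH]
      refine Ideal.mem_colon_span_singleton.mpr ?_
      rwa [show X y ^ s * u * m = X y ^ s * (u * m) from mul_assoc _ _ _]
    rcases hp.mem_or_mem this with h | h
    · exact absurd (hp.mem_of_pow_mem s h) hXy
    · exact h
  · intro hT
    refine le_antisymm ?_ hple
    intro u hu
    rw [← hT]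
    exact Ideal.mem_colon_span_singleton.mpr
      (Ideal.pow_right_mono hJHleJt s (Ideal.mem_colon_span_singleton.mp hu))
end
end

section
/- Under Notation (*): Ass(J(H)^s) = Ass(J(H̃)^s) ∪ A, where every prime p ∈ A contains the variable y, and H̃ = H_X is the induced subhypergraph of H on X. -/
open MvPolynomial

noncomputable section

/- Notation (*): `H = (V, E)` is a hypergraph with `V = X ∪ {y}` where `X = V \ {y}`;
`y` belongs to exactly one edge `e_y ∈ E`; `e := e_y \ {y}`;
`H' = (X, (E \ {e_y}) ∪ {e})` is the shadow of `H` on `X`, with edge set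
`insert (ey.erase y) (H.E.erase ey)`; `H̃ = H_X` is the induced subhypergraph on `X`,
with edge set `H.E.filter (· ⊆ H.V.erase y)`.  Cover ideals of `H'` and `H̃` are taken as
(cone) ideals of the ambient ring `K[V] = MvPolynomial σ K`, generated by the same monomials
as the corresponding ideals of `K[X]`. -/

section AuxSat

variable {σ : Type*} (K : Type*) [DecidableEq σ] [Field K]

def yEquivR (y : σ) :
    MvPolynomial σ K ≃+* Polynomial (MvPolynomial {x : σ // x ≠ y} K) :=
  ((MvPolynomial.renameEquiv K (Equiv.optionSubtypeNe y).symm).trans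
    (MvPolynomial.optionEquivLeft K _)).toRingEquiv

lemma yEquivR_X_self (y : σ) : yEquivR K y (X y) = Polynomial.X := by
  simp [yEquivR, Equiv.optionSubtypeNe_symm_self, MvPolynomial.optionEquivLeft_X_none]

lemma yEquivR_X_ne (y : σ) {i : σ} (h : i ≠ y) :
    yEquivR K y (X i) = Polynomial.C (X ⟨i, h⟩) := by
  simp [yEquivR, Equiv.optionSubtypeNe_symm_of_ne h, MvPolynomial.optionEquivLeft_X_some]

lemma mapC_iInf {A : Type*} [CommRing A] {ι : Sort*} (I : ι → Ideal A) :
    Ideal.map (Polynomial.C : A →+* Polynomial A) (⨅ i, I i) =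
      ⨅ i, Ideal.map (Polynomial.C : A →+* Polynomial A) (I i) := by
  ext f
  simp only [Ideal.mem_map_C_iff, Submodule.mem_iInf]
  exact forall_comm

lemma comap_equiv_pow {R S : Type*} [CommRing R] [CommRing S] (e : R ≃+* S)
    (I : Ideal S) (n : ℕ) :
    Ideal.comap e (I ^ n) = (Ideal.comap e I) ^ n := by
  rw [← Ideal.map_symm, ← Ideal.map_symm, Ideal.map_pow]

lemma map_yEquivR_primeOf (y : σ) (e : Finset σ) (hy : y ∉ e) :
    Ideal.map ((yEquivR K y)) (primeOf K e) =
      Ideal.map (Polynomial.C : MvPolynomial {x : σ // x ≠ y} K →+* _)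
        (primeOf K (e.subtype (· ≠ y))) := by
  unfold primeOf
  rw [Ideal.map_span, Ideal.map_span]
  congr 1
  ext z
  constructor
  · rintro ⟨w, ⟨i, hi, rfl⟩, rfl⟩
    have hi' : i ∈ e := hi
    have hne : i ≠ y := fun h => hy (h ▸ hi')
    exact ⟨X ⟨i, hne⟩, ⟨⟨i, hne⟩, by simpa [Finset.mem_subtype] using hi', rfl⟩,
      (yEquivR_X_ne K y hne).symm⟩
  · rintro ⟨w, ⟨j, hj, rfl⟩, rfl⟩
    have hj' : (j : σ) ∈ e := by simpa [Finset.mem_subtype] using hj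
    exact ⟨X (j : σ), ⟨(j : σ), hj', rfl⟩, yEquivR_X_ne K y j.2⟩

lemma coverIdealAux_pow_eq_comap (y : σ) (S : Finset (Finset σ))
    (hS : ∀ e ∈ S, y ∉ e) (s : ℕ) :
    ∃ I0 : Ideal (MvPolynomial {x : σ // x ≠ y} K),
      (⨅ e ∈ S, primeOf K e) ^ s =
        Ideal.comap (yEquivR K y)
          (Ideal.map Polynomial.C I0) := by
  refine ⟨(⨅ e : Finset σ, ⨅ _ : e ∈ S, primeOf K (e.subtype (· ≠ y))) ^ s, ?_⟩
  have key : (⨅ e ∈ S, primeOf K e) =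
      Ideal.comap (yEquivR K y)
        (Ideal.map Polynomial.C
          (⨅ e : Finset σ, ⨅ _ : e ∈ S, primeOf K (e.subtype (· ≠ y)))) := by
    simp only [mapC_iInf, Ideal.comap_iInf]
    refine iInf_congr fun e => iInf_congr fun he => ?_
    rw [← map_yEquivR_primeOf K y e (hS e he),
      Ideal.comap_map_of_bijective _ (yEquivR K y).bijective]
  rw [key, ← comap_equiv_pow, ← Ideal.map_pow]

lemma coverIdealAux_pow_colon (y : σ) (S : Finset (Finset σ))
    (hS : ∀ e ∈ S, y ∉ e) (s : ℕ) (f : MvPolynomial σ K)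
    (hf : X y * f ∈ (⨅ e ∈ S, primeOf K e) ^ s) :
    f ∈ (⨅ e ∈ S, primeOf K e) ^ s := by
  obtain ⟨I0, hI0⟩ := coverIdealAux_pow_eq_comap K y S hS s
  rw [hI0, Ideal.mem_comap] at hf ⊢
  rw [map_mul, yEquivR_X_self, Ideal.mem_map_C_iff] at hf
  rw [Ideal.mem_map_C_iff]
  intro n
  simpa [Polynomial.coeff_X_mul] using hf (n + 1)


lemma mem_ann_iff {R : Type*} [CommRing R] (I : Ideal R) (f a : R) :
    a ∈ ((⊥ : Submodule R (R ⧸ I)).colon {(Ideal.Quotient.mk I f)}).radical ↔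
      ∃ n : ℕ, a ^ n * f ∈ I := by
  rw [Ideal.mem_radical_iff]
  refine exists_congr fun n => ?_
  rw [Submodule.mem_colon_singleton, Submodule.mem_bot]
  show Ideal.Quotient.mk I (a ^ n * f) = 0 ↔ _
  rw [Ideal.Quotient.eq_zero_iff_mem]

section AuxSat2

variable {σ : Type*} (K : Type*) [DecidableEq σ] [Field K]

lemma coverIdeal_pow_colon_pow (y : σ) (S : Finset (Finset σ))
    (hS : ∀ e ∈ S, y ∉ e) (s k : ℕ) (f : MvPolynomial σ K)
    (hf : X y ^ k * f ∈ (coverIdeal K S) ^ s) :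
    f ∈ (coverIdeal K S) ^ s := by
  induction k generalizing f with
  | zero => simpa using hf
  | succ k ih =>
      have : X y ^ k * (X y * f) ∈ (coverIdeal K S) ^ s := by
        have : X y ^ (k + 1) * f = X y ^ k * (X y * f) := by ring
        rwa [this] at hf
      exact coverIdealAux_pow_colon K y S hS s f (ih _ this)

end AuxSat2

end AuxSat

/-- Under Notation (*): `Ass(J(H)^s) = Ass(J(H̃)^s) ∪ A`, where every prime
in `A` contains the variable `y`. -/
theorem ass_eq_ass_induced_union {σ K : Type*} [DecidableEq σ] [Field K]
    (H : FinHypergraph σ) (y : σ) (ey : Finset σ)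
    (hyV : y ∈ H.V) (heyE : ey ∈ H.E) (hyey : y ∈ ey)
    (huniq : ∀ f ∈ H.E, y ∈ f → f = ey)
    (s : ℕ) :
    ∃ A : Set (Ideal (MvPolynomial σ K)),
      associatedPrimes (MvPolynomial σ K)
          (MvPolynomial σ K ⧸ (coverIdeal K H.E) ^ s) =
        associatedPrimes (MvPolynomial σ K)
          (MvPolynomial σ K ⧸
            (coverIdeal K (H.E.filter (fun f => f ⊆ H.V.erase y))) ^ s) ∪ A ∧
      ∀ p ∈ A, (X y : MvPolynomial σ K) ∈ p := by
  classical
  set R := MvPolynomial σ K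
  set J : Ideal R := coverIdeal K H.E with hJdef
  set F : Finset (Finset σ) := H.E.filter (fun f => f ⊆ H.V.erase y) with hFdef
  set Jt : Ideal R := coverIdeal K F with hJtdef
  have hFy : ∀ e ∈ F, y ∉ e := by
    intro e he hy
    exact Finset.notMem_erase y H.V ((Finset.mem_filter.mp he).2 hy)
  have hJle : J ≤ Jt := by
    rw [hJdef, hJtdef]
    unfold coverIdeal
    exact le_iInf₂ fun e he => iInf₂_le e (Finset.mem_filter.mp he).1
  have hJles : J ^ s ≤ Jt ^ s := Ideal.pow_right_mono hJle s
  have hmulX : ∀ x ∈ Jt, (X y : R) * x ∈ J := by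
    intro x hx
    rw [hJdef]
    unfold coverIdeal
    rw [Submodule.mem_iInf]
    intro e
    rw [Submodule.mem_iInf]
    intro he
    by_cases hye : y ∈ e
    · exact Ideal.mul_mem_right _ _ (Ideal.subset_span ⟨y, hye, rfl⟩)
    · refine Ideal.mul_mem_left _ _ ?_
      have heF : e ∈ F := Finset.mem_filter.mpr
        ⟨he, Finset.subset_erase.mpr ⟨H.edge_sub e he, hye⟩⟩
      have hle : Jt ≤ primeOf K e := by
        rw [hJtdef]; unfold coverIdeal; exact iInf₂_le e heF
      exact hle hx
  have hpow : ∀ g ∈ Jt ^ s, (X y : R) ^ s * g ∈ J ^ s := by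
    intro g hg
    have h1 : Ideal.span {(X y : R)} * Jt ≤ J := by
      rw [Ideal.mul_le]
      intro r hr t ht
      obtain ⟨c, rfl⟩ := Ideal.mem_span_singleton.mp hr
      rw [mul_assoc]
      exact hmulX _ (Ideal.mul_mem_left _ _ ht)
    have h2 : Ideal.span {(X y : R)} ^ s * Jt ^ s ≤ J ^ s := by
      rw [← mul_pow]; exact Ideal.pow_right_mono h1 s
    have h3 : (X y : R) ^ s ∈ Ideal.span {(X y : R)} ^ s := by
      rw [Ideal.span_singleton_pow]; exact Ideal.mem_span_singleton_self _
    exact h2 (Ideal.mul_mem_mul h3 hg)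
  refine ⟨{p | p ∈ associatedPrimes R (R ⧸ J ^ s) ∧ (X y : R) ∈ p}, ?_, fun p hp => hp.2⟩
  ext p
  simp only [Set.mem_union, Set.mem_setOf_eq]
  constructor
  · intro hp
    by_cases hyp : (X y : R) ∈ p
    · exact Or.inr ⟨hp, hyp⟩
    · left
      obtain ⟨hprime, x, hx⟩ := hp
      obtain ⟨f, rfl⟩ := Ideal.Quotient.mk_surjective x
      have haf : ∀ a : R, a ∈ p ↔ ∃ n : ℕ, a ^ n * f ∈ J ^ s := fun a => by
        rw [hx, mem_ann_iff]
      refine ⟨hprime, Ideal.Quotient.mk _ ((X y : R) ^ s * f), ?_⟩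
      ext a
      rw [mem_ann_iff]
      constructor
      · intro ha
        obtain ⟨n, hn⟩ := (haf a).mp ha
        have h1 : a ^ n * f ∈ Jt ^ s := hJles hn
        refine ⟨n, ?_⟩
        have : a ^ n * ((X y : R) ^ s * f) = (X y : R) ^ s * (a ^ n * f) := by ring
        rw [this]
        exact Ideal.mul_mem_left _ _ h1
      · rintro ⟨n, ha⟩
        have h1 : (X y : R) ^ s * (a ^ n * ((X y : R) ^ s * f)) ∈ J ^ s := hpow _ ha
        have h2 : (X y : R) ^ s * (a ^ n * ((X y : R) ^ s * f))
            = (a ^ n * (X y : R) ^ (s + s)) ^ 1 * f := by ring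
        rw [h2] at h1
        have h3 : a ^ n * (X y : R) ^ (s + s) ∈ p := (haf _).mpr ⟨1, h1⟩
        rcases hprime.mem_or_mem h3 with h | h
        · exact hprime.mem_of_pow_mem _ h
        · exact absurd (hprime.mem_of_pow_mem _ h) hyp
  · rintro (hp | hp)
    · obtain ⟨hprime, x, hx⟩ := hp
      obtain ⟨f, rfl⟩ := Ideal.Quotient.mk_surjective x
      have haf : ∀ a : R, a ∈ p ↔ ∃ n : ℕ, a ^ n * f ∈ Jt ^ s := fun a => by
        rw [hx, mem_ann_iff]
      refine ⟨hprime, Ideal.Quotient.mk _ ((X y : R) ^ s * f), ?_⟩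
      ext a
      rw [mem_ann_iff]
      constructor
      · intro ha
        obtain ⟨n, hn⟩ := (haf a).mp ha
        have h1 : (X y : R) ^ s * (a ^ n * f) ∈ J ^ s := hpow _ hn
        refine ⟨n, ?_⟩
        have : a ^ n * ((X y : R) ^ s * f) = (X y : R) ^ s * (a ^ n * f) := by ring
        rw [this]
        exact h1
      · rintro ⟨n, ha⟩
        have h1 : (X y : R) ^ s * (a ^ n * f) ∈ Jt ^ s := by
          have : a ^ n * ((X y : R) ^ s * f) = (X y : R) ^ s * (a ^ n * f) := by ring
          rw [this] at ha
          exact hJles ha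
        have h2 : a ^ n * f ∈ Jt ^ s :=
          coverIdeal_pow_colon_pow K y F hFy s s (a ^ n * f) h1
        exact (haf a).mpr ⟨n, h2⟩
    · exact hp.1
end
end

section
/- Under Notation (*): let p = p' + (y) be an associated prime of J(H)^s, where p' is generated by variables in X. If p is not an associated prime of (J(H)^s : y), then p' is an associated prime of J(H')^s. -/
open MvPolynomial

noncomputable section

/- Notation (*): `H = (V, E)` is a hypergraph with `V = X ∪ {y}` where `X = V \ {y}`;
`y` belongs to exactly one edge `e_y ∈ E`; `e := e_y \ {y}`;
`H' = (X, (E \ {e_y}) ∪ {e})` is the shadow of `H` on `X`, with edge set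
`insert (ey.erase y) (H.E.erase ey)`; `H̃ = H_X` is the induced subhypergraph on `X`,
with edge set `H.E.filter (· ⊆ H.V.erase y)`.  Cover ideals of `H'` and `H̃` are taken as
(cone) ideals of the ambient ring `K[V] = MvPolynomial σ K`, generated by the same monomials
as the corresponding ideals of `K[X]`. -/

namespace St18


/-- Associated primes of `R ⧸ N` are colon ideals. -/
lemma isAssociatedPrime_quotient_iff {R : Type*} [CommRing R] (p N : Ideal R) :
    IsAssociatedPrime p (R ⧸ N) ↔ p.IsPrime ∧ ∃ x : R, p = (N.colon (Ideal.span {x})).radical := by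
  have key : ∀ x : R, (⊥ : Submodule R (R ⧸ N)).colon {(Ideal.Quotient.mk N x : R ⧸ N)}
      = N.colon (Ideal.span {x}) := by
    intro x
    ext r
    rw [Submodule.mem_colon_singleton, Ideal.mem_colon_span_singleton, Submodule.mem_bot,
      Algebra.smul_def, Ideal.Quotient.algebraMap_eq, ← map_mul,
      Ideal.Quotient.eq_zero_iff_mem]
  constructor
  · rintro ⟨hp, z, hz⟩
    obtain ⟨x, rfl⟩ := Ideal.Quotient.mk_surjective z
    exact ⟨hp, x, by rw [hz, key]⟩
  · rintro ⟨hp, x, hx⟩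
    exact ⟨hp, Ideal.Quotient.mk N x, by rw [hx, key]⟩

lemma memRC {A : Type*} [CommRing A] (I : Ideal A) (g r : A) :
    r ∈ (I.colon (Ideal.span {g})).radical ↔ ∃ n : ℕ, r ^ n * g ∈ I := by
  rw [Ideal.mem_radical_iff]
  simp only [Ideal.mem_colon_span_singleton]

lemma mem_sup_X {A : Type*} [CommRing A] (I : Ideal A) (q : Polynomial A) :
    q ∈ Ideal.map (Polynomial.C : A →+* Polynomial A) I ⊔ Ideal.span {Polynomial.X} ↔
      q.coeff 0 ∈ I := by
  constructor
  · intro hq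
    obtain ⟨m, hm, x, hx, rfl⟩ := Submodule.mem_sup.mp hq
    obtain ⟨c, rfl⟩ := Ideal.mem_span_singleton'.mp hx
    have h0 : (c * Polynomial.X).coeff 0 = 0 := by
      rw [Polynomial.mul_coeff_zero, Polynomial.coeff_X_zero, mul_zero]
    rw [Polynomial.coeff_add, h0, add_zero]
    exact Ideal.mem_map_C_iff.mp hm 0
  · intro hq
    have hdec : q = Polynomial.X * q.divX + Polynomial.C (q.coeff 0) :=
      (Polynomial.X_mul_divX_add q).symm
    rw [hdec]
    refine Submodule.add_mem _ (Ideal.mem_sup_right ?_)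
      (Ideal.mem_sup_left (Ideal.mem_map_of_mem _ hq))
    exact Ideal.mem_span_singleton.mpr ⟨q.divX, rfl⟩

lemma mapC_iInf {A : Type*} [CommRing A] {ι : Sort*} (f : ι → Ideal A) :
    Ideal.map (Polynomial.C : A →+* Polynomial A) (⨅ i, f i)
      = ⨅ i, Ideal.map (Polynomial.C : A →+* Polynomial A) (f i) := by
  ext q
  simp only [Ideal.mem_map_C_iff, Ideal.mem_iInf]
  exact forall_comm

lemma key_colon {A : Type*} [CommRing A] (p₀ I : Ideal A) (g₀ : A)
    (h : ∀ b : A, b * g₀ ∈ I ↔ b ∈ p₀) :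
    Ideal.map (Polynomial.C : A →+* Polynomial A) p₀
      = (Ideal.map (Polynomial.C : A →+* Polynomial A) I).colon
          (Ideal.span {Polynomial.C g₀}) := by
  ext q
  rw [Ideal.mem_colon_span_singleton, Ideal.mem_map_C_iff, Ideal.mem_map_C_iff]
  exact (forall_congr' fun n => by rw [Polynomial.coeff_mul_C, h]).symm

section equivs

variable {R S : Type*} [CommRing R] [CommRing S]

lemma mem_map_equiv (e : R ≃+* S) (I : Ideal R) (x : S) :
    x ∈ Ideal.map e I ↔ e.symm x ∈ I := by
  rw [show Ideal.map e I = Ideal.map (e : R →+* S) I from rfl,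
    Ideal.map_comap_of_equiv e, Ideal.mem_comap]

lemma map_equiv_iInf (e : R ≃+* S) {ι : Sort*} (f : ι → Ideal R) :
    Ideal.map e (⨅ i, f i) = ⨅ i, Ideal.map e (f i) := by
  ext x
  simp only [mem_map_equiv, Ideal.mem_iInf]

lemma map_equiv_colon (e : R ≃+* S) (I : Ideal R) (x : R) :
    Ideal.map e (I.colon (Ideal.span {x}))
      = (Ideal.map e I).colon (Ideal.span {e x}) := by
  ext z
  rw [mem_map_equiv, Ideal.mem_colon_span_singleton, Ideal.mem_colon_span_singleton,
    mem_map_equiv, map_mul, e.symm_apply_apply]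

lemma map_equiv_radical (e : R ≃+* S) (I : Ideal R) :
    Ideal.map e I.radical = (Ideal.map e I).radical := by
  ext z
  rw [mem_map_equiv, Ideal.mem_radical_iff, Ideal.mem_radical_iff]
  simp only [mem_map_equiv, map_pow]

lemma map_equiv_isPrime (e : R ≃+* S) {I : Ideal R} (h : I.IsPrime) :
    (Ideal.map e I).IsPrime := by
  rw [show Ideal.map e I = Ideal.map (e : R →+* S) I from rfl, Ideal.map_comap_of_equiv e]
  exact h.comap _

lemma map_equiv_injective (e : R ≃+* S) {I J : Ideal R}
    (h : Ideal.map e I = Ideal.map e J) : I = J := by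
  ext r
  have h1 := mem_map_equiv e I (e r)
  have h2 := mem_map_equiv e J (e r)
  rw [e.symm_apply_apply] at h1 h2
  rw [← h1, ← h2, h]

end equivs



variable {σ K : Type*} [DecidableEq σ] [Field K]

lemma primeOf_mono {e f : Finset σ} (h : e ⊆ f) : primeOf K e ≤ primeOf K f :=
  Ideal.span_mono (Set.image_mono (by exact_mod_cast h))

/-- The substitution `y ↦ 0`. -/
def setY0 (y : σ) : MvPolynomial σ K →ₐ[K] MvPolynomial σ K :=
  aeval (fun i => if i = y then 0 else X i)

lemma setY0_X_ne (y : σ) {i : σ} (h : i ≠ y) : setY0 (K := K) y (X i) = X i := by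
  simp [setY0, h]

lemma setY0_X_self (y : σ) : setY0 (K := K) y (X y) = 0 := by simp [setY0]

lemma sub_setY0_mem (y : σ) (f : MvPolynomial σ K) :
    f - setY0 y f ∈ Ideal.span {(X y : MvPolynomial σ K)} := by
  induction f using MvPolynomial.induction_on with
  | C a => simp [setY0]
  | add p q hp hq =>
    have : p + q - setY0 y (p + q) = (p - setY0 y p) + (q - setY0 y q) := by
      rw [map_add]; ring
    rw [this]; exact Submodule.add_mem _ hp hq
  | mul_X p i hp =>
    have hX : p * X i - setY0 y (p * X i)
        = (p - setY0 y p) * X i + setY0 y p * (X i - setY0 y (X i)) := by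
      rw [map_mul]; ring
    rw [hX]
    refine Submodule.add_mem _ (Ideal.mul_mem_right _ _ hp) ?_
    by_cases h : i = y
    · subst h
      rw [setY0_X_self, sub_zero]
      exact Ideal.mul_mem_left _ _ (Ideal.subset_span rfl)
    · rw [setY0_X_ne y h, sub_self, mul_zero]
      exact Submodule.zero_mem _

lemma setY0_primeOf (y : σ) (e : Finset σ) {v : MvPolynomial σ K}
    (hv : v ∈ primeOf K e) : setY0 y v ∈ primeOf K (e.erase y) := by
  have : primeOf K e ≤ Ideal.comap (setY0 (K := K) y).toRingHom (primeOf K (e.erase y)) := by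
    rw [primeOf, Ideal.span_le]
    rintro _ ⟨i, hi, rfl⟩
    simp only [SetLike.mem_coe, Ideal.mem_comap, AlgHom.toRingHom_eq_coe, RingHom.coe_coe]
    by_cases h : i = y
    · subst h; rw [setY0_X_self]; exact Submodule.zero_mem _
    · rw [setY0_X_ne y h]
      exact Ideal.subset_span ⟨i, by simp only [Finset.coe_erase, Set.mem_diff, Set.mem_singleton_iff]; exact ⟨hi, h⟩, rfl⟩
  exact this hv



variable {σ : Type*} (K : Type*) [DecidableEq σ] [Field K]

def Phi (y : σ) :
    MvPolynomial σ K ≃+* Polynomial (MvPolynomial {b : σ // b ≠ y} K) :=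
  ((renameEquiv K (Equiv.optionSubtypeNe y).symm).trans
    (optionEquivLeft K {b : σ // b ≠ y})).toRingEquiv

lemma Phi_X_ne (y : σ) {i : σ} (h : i ≠ y) :
    Phi K y (X i) = Polynomial.C (X ⟨i, h⟩) := by
  simp [Phi, Equiv.optionSubtypeNe_symm_of_ne h, optionEquivLeft_X_some]

lemma Phi_X_self (y : σ) : Phi K y (X y) = Polynomial.X := by
  simp [Phi, Equiv.optionSubtypeNe_symm_self, optionEquivLeft_X_none]

/-- The prime of the small ring corresponding to a `y`-free edge. -/
def smallPrime (y : σ) (e : Finset σ) : Ideal (MvPolynomial {b : σ // b ≠ y} K) :=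
  Ideal.span ((fun i => (X i : MvPolynomial {b : σ // b ≠ y} K)) ''
    {i : {b : σ // b ≠ y} | (i : σ) ∈ e})

lemma Phi_primeOf (y : σ) (e : Finset σ) (hy : y ∉ e) :
    Ideal.map (Phi K y) (primeOf K e)
      = Ideal.map (Polynomial.C : _ →+* _) (smallPrime K y e) := by
  apply le_antisymm
  · rw [Ideal.map_le_iff_le_comap, primeOf, Ideal.span_le]
    rintro _ ⟨i, hi, rfl⟩
    have hiy : i ≠ y := fun h => hy (h ▸ hi)
    simp only [SetLike.mem_coe, Ideal.mem_comap]
    rw [Phi_X_ne K y hiy]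
    exact Ideal.mem_map_of_mem _ (Ideal.subset_span ⟨⟨i, hiy⟩, hi, rfl⟩)
  · rw [Ideal.map_le_iff_le_comap, smallPrime, Ideal.span_le]
    rintro _ ⟨i, hi, rfl⟩
    simp only [SetLike.mem_coe, Ideal.mem_comap]
    rw [← Phi_X_ne K y i.2]
    exact Ideal.mem_map_of_mem _ (Ideal.subset_span ⟨(i : σ), hi, rfl⟩)

lemma Phi_spanXy (y : σ) :
    Ideal.map (Phi K y) (Ideal.span {(X y : MvPolynomial σ K)})
      = Ideal.span {(Polynomial.X : Polynomial (MvPolynomial {b : σ // b ≠ y} K))} := by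
  rw [Ideal.map_span, Set.image_singleton, Phi_X_self]


end St18

/-- Under Notation (*): let `p = p' + (y) ∈ Ass(J(H)^s)` where `p'` is
generated by variables of `X`. If `p ∉ Ass(J(H)^s : y)`, then `p' ∈ Ass(J(H')^s)`. -/
theorem shadow_assoc_of_not_assoc_colon_y {σ K : Type*} [DecidableEq σ] [Field K]
    (H : FinHypergraph σ) (y : σ) (ey : Finset σ)
    (hyV : y ∈ H.V) (heyE : ey ∈ H.E) (hyey : y ∈ ey)
    (huniq : ∀ f ∈ H.E, y ∈ f → f = ey)
    (s : ℕ) (F : Finset σ) (hF : F ⊆ H.V.erase y)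
    (hass : IsAssociatedPrime (primeOf K F ⊔ Ideal.span {(X y : MvPolynomial σ K)})
        (MvPolynomial σ K ⧸ (coverIdeal K H.E) ^ s))
    (hnot : ¬ IsAssociatedPrime (primeOf K F ⊔ Ideal.span {(X y : MvPolynomial σ K)})
        (MvPolynomial σ K ⧸
          ((coverIdeal K H.E) ^ s).colon (Ideal.span {(X y : MvPolynomial σ K)}))) :
    IsAssociatedPrime (primeOf K F)
      (MvPolynomial σ K ⧸ (coverIdeal K (insert (ey.erase y) (H.E.erase ey))) ^ s) := by
  classical
  set E' : Finset (Finset σ) := insert (ey.erase y) (H.E.erase ey) with hE'def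
  set J : Ideal (MvPolynomial σ K) := coverIdeal K H.E with hJdef
  set J' : Ideal (MvPolynomial σ K) := coverIdeal K E' with hJ'def
  set Y : Ideal (MvPolynomial σ K) := Ideal.span {(X y : MvPolynomial σ K)} with hYdef
  set p' : Ideal (MvPolynomial σ K) := primeOf K F with hp'def
  set I0 : Ideal (MvPolynomial {b : σ // b ≠ y} K) := ⨅ e ∈ E', St18.smallPrime K y e
    with hI0def
  have memJ : ∀ u : MvPolynomial σ K, u ∈ J ↔ ∀ e ∈ H.E, u ∈ primeOf K e := by
    intro u; rw [hJdef]; simp [coverIdeal, Ideal.mem_iInf]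
  have memJ' : ∀ u : MvPolynomial σ K, u ∈ J' ↔ ∀ e ∈ E', u ∈ primeOf K e := by
    intro u; rw [hJ'def]; simp [coverIdeal, Ideal.mem_iInf]
  have hyE' : ∀ e ∈ E', y ∉ e := by
    intro e he
    rw [hE'def, Finset.mem_insert] at he
    rcases he with rfl | he
    · exact Finset.notMem_erase y ey
    · rw [Finset.mem_erase] at he
      exact fun hy => he.1 (huniq e he.2 hy)
  have hJ'J : J' ≤ J := by
    intro u hu
    rw [memJ]; intro e he
    by_cases hee : e = ey
    · subst hee
      exact St18.primeOf_mono (Finset.erase_subset y e)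
        ((memJ' u).mp hu _ (by rw [hE'def]; exact Finset.mem_insert_self _ _))
    · exact (memJ' u).mp hu e
        (by rw [hE'def]; exact Finset.mem_insert_of_mem (Finset.mem_erase.mpr ⟨hee, he⟩))
  have hphiJ : Ideal.map (St18.setY0 (K := K) y).toRingHom J ≤ J' := by
    rw [Ideal.map_le_iff_le_comap]
    intro u hu
    rw [Ideal.mem_comap]
    rw [show ((St18.setY0 (K := K) y).toRingHom u) = St18.setY0 (K := K) y u from rfl, memJ']
    intro e' he'
    rw [hE'def, Finset.mem_insert] at he'
    rcases he' with rfl | he'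
    · exact St18.setY0_primeOf y ey ((memJ u).mp hu ey heyE)
    · have h1 := Finset.mem_erase.mp he'
      have h2 : y ∉ e' := fun hy => h1.1 (huniq e' h1.2 hy)
      have h3 := St18.setY0_primeOf y e' ((memJ u).mp hu e' h1.2)
      rwa [Finset.erase_eq_of_notMem h2] at h3
  have hstep2 : J ^ s ⊔ Y = J' ^ s ⊔ Y := by
    apply le_antisymm
    · refine sup_le ?_ le_sup_right
      intro u hu
      have h1 : St18.setY0 (K := K) y u ∈ J' ^ s := by
        have hm : (St18.setY0 (K := K) y).toRingHom u
            ∈ Ideal.map (St18.setY0 (K := K) y).toRingHom (J ^ s) :=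
          Ideal.mem_map_of_mem _ hu
        rw [Ideal.map_pow] at hm
        exact Ideal.pow_right_mono hphiJ s hm
      have h2 := St18.sub_setY0_mem y u
      rw [hYdef] at *
      have h4 : u = St18.setY0 (K := K) y u + (u - St18.setY0 (K := K) y u) := by ring
      rw [h4]
      exact Submodule.add_mem _ (Ideal.mem_sup_left h1) (Ideal.mem_sup_right h2)
    · exact sup_le (le_trans (Ideal.pow_right_mono hJ'J s) le_sup_left) le_sup_right
  have hprime : (p' ⊔ Y).IsPrime := hass.1
  obtain ⟨-, f, hf⟩ := (St18.isAssociatedPrime_quotient_iff _ _).mp hass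
  have hpQ : p' ⊔ Y ≤ ((J ^ s ⊔ Y).colon (Ideal.span {f})).radical := by
    intro a ha
    rw [hf, St18.memRC] at ha
    rw [St18.memRC]
    obtain ⟨n, hn⟩ := ha
    exact ⟨n, Ideal.mem_sup_left hn⟩
  have hQp : p' ⊔ Y = ((J ^ s ⊔ Y).colon (Ideal.span {f})).radical := by
    by_contra hne
    obtain ⟨a0, haQ, hap0⟩ := SetLike.exists_of_lt (lt_of_le_of_ne hpQ hne)
    obtain ⟨m, hm⟩ := (St18.memRC _ _ _).mp haQ
    set a := a0 ^ m with ha_def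
    have hap : a ∉ p' ⊔ Y := fun h => hap0 (hprime.mem_of_pow_mem m h)
    obtain ⟨j, hj, t, ht, hdec⟩ := Submodule.mem_sup.mp hm
    obtain ⟨h0, rfl⟩ := Ideal.mem_span_singleton'.mp ht
    refine hnot ((St18.isAssociatedPrime_quotient_iff _ _).mpr ⟨hprime, h0, ?_⟩)
    ext r
    rw [St18.memRC]
    constructor
    · intro hr
      rw [hf, St18.memRC] at hr
      obtain ⟨n, hrf⟩ := hr
      refine ⟨n, Ideal.mem_colon_span_singleton.mpr ?_⟩
      have h1 : a * (r ^ n * f) ∈ J ^ s := Ideal.mul_mem_left _ _ hrf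
      have h2 : r ^ n * h0 * X y = a * (r ^ n * f) - r ^ n * j := by
        linear_combination r ^ n * hdec
      rw [h2]
      exact Submodule.sub_mem _ h1 (Ideal.mul_mem_left _ _ hj)
    · rintro ⟨n, hr⟩
      replace hr := Ideal.mem_colon_span_singleton.mp hr
      have h1 : (r ^ n * a) * f ∈ J ^ s := by
        have h3 : (r ^ n * a) * f = r ^ n * j + r ^ n * h0 * X y := by
          linear_combination (-r ^ n) * hdec
        rw [h3]
        exact Submodule.add_mem _ (Ideal.mul_mem_left _ _ hj) hr
      have h2 : r ^ n * a ∈ p' ⊔ Y := by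
        rw [hf, St18.memRC]; exact ⟨1, by rw [pow_one]; exact h1⟩
      rcases hprime.mem_or_mem h2 with h | h
      · exact hprime.mem_of_pow_mem n h
      · exact absurd h hap
  have hp_eq : p' ⊔ Y = ((J' ^ s ⊔ Y).colon (Ideal.span {f})).radical := by rw [hQp, hstep2]
  -- transport along Phi
  have hyF : y ∉ F := fun h => (Finset.mem_erase.mp (hF h)).1 rfl
  have hPhip' : Ideal.map (St18.Phi K y) p'
      = Ideal.map (Polynomial.C : _ →+* _) (St18.smallPrime K y F) := by
    rw [hp'def]; exact St18.Phi_primeOf K y F hyF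
  have hPhiJ' : Ideal.map (St18.Phi K y) J' = Ideal.map (Polynomial.C : _ →+* _) I0 := by
    rw [hJ'def, hI0def, coverIdeal, St18.map_equiv_iInf, St18.mapC_iInf]
    refine iInf_congr fun e => ?_
    rw [St18.map_equiv_iInf, St18.mapC_iInf]
    exact iInf_congr fun he => St18.Phi_primeOf K y e (hyE' e he)
  have hPhiY : Ideal.map (St18.Phi K y) Y = Ideal.span {Polynomial.X} := by
    rw [hYdef]; exact St18.Phi_spanXy K y
  have trans1 : Ideal.map (St18.Phi K y) (p' ⊔ Y)
      = Ideal.map (Polynomial.C : _ →+* _) (St18.smallPrime K y F)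
        ⊔ Ideal.span {Polynomial.X} := by
    rw [Ideal.map_sup, hPhip', hPhiY]
  have trans2 : Ideal.map (St18.Phi K y) ((J' ^ s ⊔ Y).colon (Ideal.span {f})).radical
      = ((Ideal.map (Polynomial.C : _ →+* _) (I0 ^ s)
          ⊔ Ideal.span {Polynomial.X}).colon (Ideal.span {St18.Phi K y f})).radical := by
    rw [St18.map_equiv_radical, St18.map_equiv_colon, Ideal.map_sup, Ideal.map_pow, hPhiJ', hPhiY, ← Ideal.map_pow]
  have hdown : Ideal.map (Polynomial.C : _ →+* _) (St18.smallPrime K y F)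
        ⊔ Ideal.span {Polynomial.X}
      = ((Ideal.map (Polynomial.C : _ →+* _) (I0 ^ s)
          ⊔ Ideal.span {Polynomial.X}).colon (Ideal.span {St18.Phi K y f})).radical := by
    rw [← trans1, ← trans2, hp_eq]
  have hkey : ∀ b, (∃ n : ℕ, b ^ n * (St18.Phi K y f).coeff 0 ∈ I0 ^ s)
      ↔ b ∈ St18.smallPrime K y F := by
    intro b
    have h1 := St18.mem_sup_X (St18.smallPrime K y F) (Polynomial.C b)
    rw [Polynomial.coeff_C_zero] at h1
    rw [← h1, hdown, St18.memRC]
    simp only [St18.mem_sup_X, ← Polynomial.C_pow, Polynomial.coeff_C_mul]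
  have hprime_down : (Ideal.map (Polynomial.C : _ →+* _) (St18.smallPrime K y F)
      ⊔ Ideal.span {Polynomial.X}).IsPrime := by
    rw [← trans1]; exact St18.map_equiv_isPrime _ hprime
  have hsmall_prime : (St18.smallPrime K y F).IsPrime := by
    have h2 : St18.smallPrime K y F
        = Ideal.comap (Polynomial.C : _ →+* _)
            (Ideal.map (Polynomial.C : _ →+* _) (St18.smallPrime K y F)
              ⊔ Ideal.span {Polynomial.X}) := by
      ext b
      rw [Ideal.mem_comap, St18.mem_sup_X, Polynomial.coeff_C_zero]
    rw [h2]
    haveI := hprime_down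
    exact Ideal.IsPrime.comap _
  have hmapC_prime : (Ideal.map (Polynomial.C : _ →+* _) (St18.smallPrime K y F)).IsPrime :=
    by haveI := hsmall_prime; exact Ideal.isPrime_map_C_of_isPrime
  have hp'_prime : p'.IsPrime := by
    have h3 : p' = Ideal.comap (St18.Phi K y)
        (Ideal.map (Polynomial.C : _ →+* _) (St18.smallPrime K y F)) := by
      rw [← hPhip']
      ext r
      rw [Ideal.mem_comap, St18.mem_map_equiv, RingEquiv.symm_apply_apply]
    rw [h3]
    haveI := hmapC_prime
    exact Ideal.IsPrime.comap _
  have hQr : ((I0 ^ s).colon (Ideal.span {(St18.Phi K y f).coeff 0})).radical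
      = St18.smallPrime K y F := by
    ext b
    rw [St18.memRC]
    exact hkey b
  have hfd : Ideal.map (Polynomial.C : _ →+* _) (St18.smallPrime K y F)
      = ((Ideal.map (Polynomial.C : _ →+* _) (I0 ^ s)).colon
          (Ideal.span {Polynomial.C ((St18.Phi K y f).coeff 0)})).radical := by
    have hc := St18.key_colon ((I0 ^ s).colon (Ideal.span {(St18.Phi K y f).coeff 0}))
      (I0 ^ s) ((St18.Phi K y f).coeff 0) (fun b => Ideal.mem_colon_span_singleton.symm)
    rw [← hc]
    apply le_antisymm
    · conv_lhs => rw [← hQr]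
      exact Ideal.map_radical_le _
    · rw [hmapC_prime.radical_le_iff]
      exact Ideal.map_mono (hQr ▸ Ideal.le_radical)
  refine (St18.isAssociatedPrime_quotient_iff _ _).mpr
    ⟨hp'_prime, (St18.Phi K y).symm (Polynomial.C ((St18.Phi K y f).coeff 0)), ?_⟩
  apply St18.map_equiv_injective (St18.Phi K y)
  rw [hPhip', St18.map_equiv_radical, St18.map_equiv_colon, Ideal.map_pow, hPhiJ', ← Ideal.map_pow,
    RingEquiv.apply_symm_apply, hfd]
end
end
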